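/- arXiv:1804.09354 — 13 statements merged into one kernel-verified Lean document; each statement's English description precedes it below -/
import Mathlib

section
/- Let DMU_o = (x_o,y_o), o ∈ J, be FDH_V-efficient and suppose G-IRS prevails at DMU_o. Then the index set Π := {j ∈ J : α_{jo} > 1} is nonempty. -/
open Set

noncomputable section

/-- The FDH variable-returns-to-scale technology:
`T = {(x,y) : y ≥ 0 and ∃ j, x_j ≤ x and y ≤ y_j}`. -/
def FDH {n m s : ℕ} (x : Fin n → Fin m → ℝ) (y : Fin n → Fin s → ℝ) :
    Set ((Fin m → ℝ) × (Fin s → ℝ)) :=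
  {p | (∀ r, 0 ≤ p.2 r) ∧ ∃ j : Fin n, (∀ i, x j i ≤ p.1 i) ∧ (∀ r, p.2 r ≤ y j r)}

/-- DMU_o is FDH_V-efficient: no (x,y) ∈ T with x ≤ x_o, y ≥ y_o, (x,y) ≠ (x_o,y_o). -/
def FDHEfficient {n m s : ℕ} (x : Fin n → Fin m → ℝ) (y : Fin n → Fin s → ℝ)
    (o : Fin n) : Prop :=
  ¬ ∃ p ∈ FDH x y, (∀ i, p.1 i ≤ x o i) ∧ (∀ r, y o r ≤ p.2 r) ∧ p ≠ (x o, y o)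

/-- `α_{jo} = max_i x_{ij} / x_{io}`. -/
def alphaRatio {n m s : ℕ} (x : Fin n → Fin m → ℝ) (_y : Fin n → Fin s → ℝ)
    (o j : Fin n) : ℝ :=
  ⨆ i : Fin m, x j i / x o i

/-- `β_{jo} = min_r y_{rj} / y_{ro}`. -/
def betaRatio {n m s : ℕ} (_x : Fin n → Fin m → ℝ) (y : Fin n → Fin s → ℝ)
    (o j : Fin n) : ℝ :=
  ⨅ r : Fin s, y j r / y o r

/-- `θ_o(D) = inf {θ : ∃ j ∈ J, δ ∈ D, δ x_j ≤ θ x_o, δ y_j ≥ y_o}`. -/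
def thetaEff {n m s : ℕ} (x : Fin n → Fin m → ℝ) (y : Fin n → Fin s → ℝ)
    (o : Fin n) (D : Set ℝ) : ℝ :=
  sInf {θ : ℝ | ∃ j : Fin n, ∃ δ ∈ D,
    (∀ i, δ * x j i ≤ θ * x o i) ∧ (∀ r, y o r ≤ δ * y j r)}

/-- G-IRS prevails at DMU_o iff `θ_o^{ND} > θ_o^{C} = θ_o^{NI}`. -/
def GIRS {n m s : ℕ} (x : Fin n → Fin m → ℝ) (y : Fin n → Fin s → ℝ)
    (o : Fin n) : Prop :=
  thetaEff x y o (Ici 1) > thetaEff x y o (Ici 0) ∧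
    thetaEff x y o (Ici 0) = thetaEff x y o (Icc 0 1)

/-- G-DRS prevails at DMU_o iff `θ_o^{NI} > θ_o^{C} = θ_o^{ND}`. -/
def GDRS {n m s : ℕ} (x : Fin n → Fin m → ℝ) (y : Fin n → Fin s → ℝ)
    (o : Fin n) : Prop :=
  thetaEff x y o (Icc 0 1) > thetaEff x y o (Ici 0) ∧
    thetaEff x y o (Ici 0) = thetaEff x y o (Ici 1)

/-- G-CRS prevails at DMU_o iff `θ_o^{C} = θ_o^{NI} = θ_o^{ND} = 1`. -/
def GCRS {n m s : ℕ} (x : Fin n → Fin m → ℝ) (y : Fin n → Fin s → ℝ)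
    (o : Fin n) : Prop :=
  thetaEff x y o (Ici 0) = 1 ∧ thetaEff x y o (Icc 0 1) = 1 ∧
    thetaEff x y o (Ici 1) = 1

/-- G-SCRS prevails at DMU_o iff `θ_o^{C} = θ_o^{NI} = θ_o^{ND} < 1`. -/
def GSCRS {n m s : ℕ} (x : Fin n → Fin m → ℝ) (y : Fin n → Fin s → ℝ)
    (o : Fin n) : Prop :=
  thetaEff x y o (Ici 0) = thetaEff x y o (Icc 0 1) ∧
    thetaEff x y o (Icc 0 1) = thetaEff x y o (Ici 1) ∧
    thetaEff x y o (Ici 1) < 1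

/-- Response function `β_o(α) = sup {β : (α x_o, β y_o) ∈ T}`. -/
def respFun {n m s : ℕ} (x : Fin n → Fin m → ℝ) (y : Fin n → Fin s → ℝ)
    (o : Fin n) (α : ℝ) : ℝ :=
  sSup {β : ℝ | ((fun i => α * x o i), (fun r => β * y o r)) ∈ FDH x y}

/-- Maximum incremental ratio `σ_o^+ = sup_{α > 1} (β_o(α) - 1)/(α - 1)`. -/
def sigmaPlus {n m s : ℕ} (x : Fin n → Fin m → ℝ) (y : Fin n → Fin s → ℝ)
    (o : Fin n) : ℝ :=
  sSup {ρ : ℝ | ∃ α : ℝ, 1 < α ∧ ρ = (respFun x y o α - 1) / (α - 1)}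

/-- Minimum decremental ratio `σ_o^- = inf {(β_o(α)-1)/(α-1) : α < 1 feasible}`,
taken in the extended reals (so it is `+∞` when no `α < 1` is feasible). -/
def sigmaMinus {n m s : ℕ} (x : Fin n → Fin m → ℝ) (y : Fin n → Fin s → ℝ)
    (o : Fin n) : EReal :=
  sInf {ρ : EReal | ∃ α : ℝ, α < 1 ∧
    (∃ β : ℝ, ((fun i => α * x o i), (fun r => β * y o r)) ∈ FDH x y) ∧
    ρ = (((respFun x y o α - 1) / (α - 1) : ℝ) : EReal)}

/-- Right-IRS: `(δ x_o, δ y_o) ∈ int T` for some `δ > 1`. -/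
def RightIRS {n m s : ℕ} (x : Fin n → Fin m → ℝ) (y : Fin n → Fin s → ℝ)
    (o : Fin n) : Prop :=
  ∃ δ : ℝ, 1 < δ ∧
    ((fun i => δ * x o i), (fun r => δ * y o r)) ∈ interior (FDH x y)

/-- Right-DRS: `(δ x_o, δ y_o) ∉ T` for every `δ > 1`. -/
def RightDRS {n m s : ℕ} (x : Fin n → Fin m → ℝ) (y : Fin n → Fin s → ℝ)
    (o : Fin n) : Prop :=
  ∀ δ : ℝ, 1 < δ →
    ((fun i => δ * x o i), (fun r => δ * y o r)) ∉ FDH x y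

/-- Right-CRS: neither Right-IRS nor Right-DRS. -/
def RightCRS {n m s : ℕ} (x : Fin n → Fin m → ℝ) (y : Fin n → Fin s → ℝ)
    (o : Fin n) : Prop :=
  ¬ RightIRS x y o ∧ ¬ RightDRS x y o

/-- Left-IRS: `(δ x_o, δ y_o) ∉ T` for every `δ ∈ (0,1)`. -/
def LeftIRS {n m s : ℕ} (x : Fin n → Fin m → ℝ) (y : Fin n → Fin s → ℝ)
    (o : Fin n) : Prop :=
  ∀ δ : ℝ, 0 < δ → δ < 1 →
    ((fun i => δ * x o i), (fun r => δ * y o r)) ∉ FDH x y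

/-- Left-DRS: `(δ x_o, δ y_o) ∈ int T` for some `δ ∈ (0,1)`. -/
def LeftDRS {n m s : ℕ} (x : Fin n → Fin m → ℝ) (y : Fin n → Fin s → ℝ)
    (o : Fin n) : Prop :=
  ∃ δ : ℝ, 0 < δ ∧ δ < 1 ∧
    ((fun i => δ * x o i), (fun r => δ * y o r)) ∈ interior (FDH x y)

/-- Left-CRS: neither Left-IRS nor Left-DRS. -/
def LeftCRS {n m s : ℕ} (x : Fin n → Fin m → ℝ) (y : Fin n → Fin s → ℝ)
    (o : Fin n) : Prop :=
  ¬ LeftIRS x y o ∧ ¬ LeftDRS x y o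

/-- if DMU_o is FDH_V-efficient and G-IRS prevails at it, then
`Π = {j ∈ J : α_{jo} > 1}` is nonempty. -/
theorem stmt0 {n m s : ℕ} (hm : 0 < m) (hs : 0 < s)
    (x : Fin n → Fin m → ℝ) (y : Fin n → Fin s → ℝ)
    (hx : ∀ j i, 0 < x j i) (hy : ∀ j r, 0 < y j r)
    (o : Fin n) (heff : FDHEfficient x y o) (hgirs : GIRS x y o) :
    ∃ j : Fin n, 1 < alphaRatio x y o j := by
  by_contra hcon
  push_neg at hcon
  have hxle : ∀ j i, x j i ≤ x o i := by
    intro j i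
    have h1 : x j i / x o i ≤ alphaRatio x y o j := by
      haveI : Nonempty (Fin m) := ⟨⟨0, hm⟩⟩
      exact le_ciSup (f := fun i => x j i / x o i) (Set.Finite.bddAbove (Set.finite_range _)) i
    have h2 : x j i / x o i ≤ 1 := h1.trans (hcon j)
    have := (div_le_one (hx o i)).mp h2
    exact this
  -- feasible set for C is contained in that for ND
  have hsub : {θ : ℝ | ∃ j : Fin n, ∃ δ ∈ Ici (0:ℝ),
      (∀ i, δ * x j i ≤ θ * x o i) ∧ (∀ r, y o r ≤ δ * y j r)} ⊆
      {θ : ℝ | ∃ j : Fin n, ∃ δ ∈ Ici (1:ℝ),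
      (∀ i, δ * x j i ≤ θ * x o i) ∧ (∀ r, y o r ≤ δ * y j r)} := by
    rintro θ ⟨j, δ, hδ0, hxc, hyc⟩
    by_cases hδ1 : 1 ≤ δ
    · exact ⟨j, δ, hδ1, hxc, hyc⟩
    · push_neg at hδ1
      exfalso
      have hyr : ∀ r, y o r < y j r := by
        intro r
        have h1 : y o r ≤ δ * y j r := hyc r
        have hδpos : 0 < δ := by
          by_contra hδp
          push_neg at hδp
          have : δ * y j r ≤ 0 := mul_nonpos_of_nonpos_of_nonneg hδp (hy j r).le
          linarith [hy o r]
        have : δ * y j r < 1 * y j r :=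
          mul_lt_mul_of_pos_right hδ1 (hy j r)
        linarith [one_mul (y j r)]
      apply heff
      refine ⟨(x j, y j), ⟨fun r => (hy j r).le, j, fun i => le_rfl, fun r => le_rfl⟩,
        fun i => hxle j i, fun r => (hyr r).le, ?_⟩
      intro h
      have := congrArg Prod.snd h
      have h2 : y j ⟨0, hs⟩ = y o ⟨0, hs⟩ := congrFun this ⟨0, hs⟩
      exact absurd h2 (ne_of_gt (hyr ⟨0, hs⟩))
  have hne : ({θ : ℝ | ∃ j : Fin n, ∃ δ ∈ Ici (0:ℝ),
      (∀ i, δ * x j i ≤ θ * x o i) ∧ (∀ r, y o r ≤ δ * y j r)}).Nonempty :=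
    ⟨1, o, 1, by norm_num, fun i => le_of_eq (by ring), fun r => le_of_eq (by ring)⟩
  have hbdd : BddBelow {θ : ℝ | ∃ j : Fin n, ∃ δ ∈ Ici (1:ℝ),
      (∀ i, δ * x j i ≤ θ * x o i) ∧ (∀ r, y o r ≤ δ * y j r)} := by
    refine ⟨0, ?_⟩
    rintro θ ⟨j, δ, hδ1, hxc, _⟩
    have h1 : 0 < δ * x j ⟨0, hm⟩ := mul_pos (lt_of_lt_of_le one_pos hδ1) (hx j _)
    have h2 : 0 < θ * x o ⟨0, hm⟩ := lt_of_lt_of_le h1 (hxc _)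
    nlinarith [hx o (⟨0, hm⟩ : Fin m)]
  have hle : thetaEff x y o (Ici 1) ≤ thetaEff x y o (Ici 0) :=
    csInf_le_csInf hbdd hne hsub
  exact absurd hgirs.1 (not_lt.mpr hle)
end
end

section
/- Let DMU_o = (x_o,y_o), o ∈ J, be FDH_V-efficient. Then Right-IRS prevails at DMU_o if and only if there exist j ∈ J and δ > 1 such that x_j < δ·x_o and y_j > δ·y_o (strict inequalities componentwise). -/
open Set

noncomputable section

/-- Right-IRS prevails at the FDH_V-efficient DMU_o iff there exist
`j ∈ J` and `δ > 1` with `x_j < δ x_o` and `y_j > δ y_o` componentwise. -/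
theorem stmt2 {n m s : ℕ} (hm : 0 < m) (hs : 0 < s)
    (x : Fin n → Fin m → ℝ) (y : Fin n → Fin s → ℝ)
    (hx : ∀ j i, 0 < x j i) (hy : ∀ j r, 0 < y j r)
    (o : Fin n) (heff : FDHEfficient x y o) :
    RightIRS x y o ↔
      ∃ j : Fin n, ∃ δ : ℝ, 1 < δ ∧
        (∀ i, x j i < δ * x o i) ∧ (∀ r, δ * y o r < y j r) := by
  constructor
  · rintro ⟨δ, hδ, hmem⟩
    obtain ⟨ε, hε, hball⟩ := Metric.mem_nhds_iff.mp (mem_interior_iff_mem_nhds.mp hmem)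
    set p : (Fin m → ℝ) × (Fin s → ℝ) :=
      ((fun i => δ * x o i), (fun r => δ * y o r)) with hp
    set q : (Fin m → ℝ) × (Fin s → ℝ) :=
      ((fun i => δ * x o i - ε/2), (fun r => δ * y o r + ε/2)) with hq
    have hqmem : q ∈ FDH x y := by
      apply hball
      rw [Metric.mem_ball, Prod.dist_eq]
      have h1 : dist q.1 p.1 ≤ ε/2 := by
        refine (dist_pi_le_iff (by positivity)).mpr fun i => ?_
        simp only [hp, hq, Real.dist_eq]
        rw [show δ * x o i - ε/2 - δ * x o i = -(ε/2) by ring, abs_neg, abs_of_pos (by positivity)]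
      have h2 : dist q.2 p.2 ≤ ε/2 := by
        refine (dist_pi_le_iff (by positivity)).mpr fun r => ?_
        simp only [hp, hq, Real.dist_eq]
        rw [show δ * y o r + ε/2 - δ * y o r = ε/2 by ring, abs_of_pos (by positivity)]
      calc max (dist q.1 p.1) (dist q.2 p.2) ≤ ε/2 := max_le h1 h2
        _ < ε := by linarith
    obtain ⟨hpos, j, hxj, hyj⟩ := hqmem
    refine ⟨j, δ, hδ, fun i => ?_, fun r => ?_⟩
    · have := hxj i; simp only [hq] at this; linarith
    · have := hyj r; simp only [hq] at this; linarith
  · rintro ⟨j, δ, hδ, hxj, hyj⟩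
    refine ⟨δ, hδ, ?_⟩
    set U : Set ((Fin m → ℝ) × (Fin s → ℝ)) :=
      {p | (∀ i, x j i < p.1 i) ∧ ∀ r, 0 < p.2 r ∧ p.2 r < y j r} with hU
    have hopen : IsOpen U := by
      have e1 : IsOpen {p : (Fin m → ℝ) × (Fin s → ℝ) | ∀ i, x j i < p.1 i} := by
        rw [show {p : (Fin m → ℝ) × (Fin s → ℝ) | ∀ i, x j i < p.1 i}
            = ⋂ i, {p | x j i < p.1 i} by ext p; simp]
        exact isOpen_iInter_of_finite fun i =>
          isOpen_lt continuous_const ((continuous_apply i).comp continuous_fst)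
      have e2 : IsOpen {p : (Fin m → ℝ) × (Fin s → ℝ) | ∀ r, 0 < p.2 r ∧ p.2 r < y j r} := by
        rw [show {p : (Fin m → ℝ) × (Fin s → ℝ) | ∀ r, 0 < p.2 r ∧ p.2 r < y j r}
            = ⋂ r, ({p | 0 < p.2 r} ∩ {p | p.2 r < y j r}) by ext p; simp [forall_and]]
        exact isOpen_iInter_of_finite fun r =>
          (isOpen_lt continuous_const ((continuous_apply r).comp continuous_snd)).inter
            (isOpen_lt ((continuous_apply r).comp continuous_snd) continuous_const)
      exact e1.inter e2
    have hsub : U ⊆ FDH x y := by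
      rintro p ⟨h1, h2⟩
      exact ⟨fun r => (h2 r).1.le, j, fun i => (h1 i).le, fun r => (h2 r).2.le⟩
    have hmemU : ((fun i => δ * x o i), (fun r => δ * y o r)) ∈ U := by
      refine ⟨fun i => hxj i, fun r => ⟨?_, hyj r⟩⟩
      show 0 < δ * y o r
      have := hy o r; nlinarith
    exact interior_maximal hsub hopen hmemU
end
end

section
/- Let DMU_o = (x_o,y_o), o ∈ J, be FDH_V-efficient. Then Right-IRS prevails at DMU_o if and only if there exists j ∈ J such that β_{jo} > 1 and α_{jo} < β_{jo}. -/
open Set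

noncomputable section

/-- Right-IRS prevails at the FDH_V-efficient DMU_o iff there is
`j ∈ J` with `β_{jo} > 1` and `α_{jo} < β_{jo}`. -/
theorem stmt4 {n m s : ℕ} (hm : 0 < m) (hs : 0 < s)
    (x : Fin n → Fin m → ℝ) (y : Fin n → Fin s → ℝ)
    (hx : ∀ j i, 0 < x j i) (hy : ∀ j r, 0 < y j r)
    (o : Fin n) (heff : FDHEfficient x y o) :
    RightIRS x y o ↔
      ∃ j : Fin n, 1 < betaRatio x y o j ∧ alphaRatio x y o j < betaRatio x y o j := by
  haveI : Nonempty (Fin m) := Fin.pos_iff_nonempty.mp hm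
  haveI : Nonempty (Fin s) := Fin.pos_iff_nonempty.mp hs
  constructor
  · rintro ⟨δ, hδ, hmem⟩
    set f : ℝ → (Fin m → ℝ) × (Fin s → ℝ) :=
      fun ε => (fun i => δ * x o i - ε, fun r => δ * y o r + ε) with hf_def
    have hf : Continuous f := by
      refine Continuous.prodMk ?_ ?_ <;> exact continuous_pi fun _ => by fun_prop
    have h0 : f 0 ∈ interior (FDH x y) := by simpa [hf_def] using hmem
    have hnhds : f ⁻¹' interior (FDH x y) ∈ nhds (0 : ℝ) :=
      hf.continuousAt.preimage_mem_nhds (isOpen_interior.mem_nhds h0)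
    obtain ⟨ε, εpos, hball⟩ := Metric.mem_nhds_iff.mp hnhds
    have hmem2 : f (ε / 2) ∈ FDH x y := by
      refine interior_subset (hball ?_)
      simp only [Metric.mem_ball, Real.dist_eq, sub_zero]
      rw [abs_of_pos (by linarith)]; linarith
    obtain ⟨-, j, hxj, hyj⟩ := hmem2
    refine ⟨j, ?_, ?_⟩
    · have hβ : δ < betaRatio x y o j := by
        obtain ⟨r, hr⟩ := exists_eq_ciInf_of_finite (f := fun r => y j r / y o r)
        rw [betaRatio, ← hr]
        have := hyj r
        rw [lt_div_iff₀ (hy o r)]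
        simp only [hf_def] at this
        nlinarith [hy o r]
      linarith
    · have hα : alphaRatio x y o j < δ := by
        obtain ⟨i, hi⟩ := exists_eq_ciSup_of_finite (f := fun i => x j i / x o i)
        rw [alphaRatio, ← hi]
        have := hxj i
        rw [div_lt_iff₀ (hx o i)]
        simp only [hf_def] at this
        nlinarith [hx o i]
      have hβ : δ < betaRatio x y o j := by
        obtain ⟨r, hr⟩ := exists_eq_ciInf_of_finite (f := fun r => y j r / y o r)
        rw [betaRatio, ← hr]
        have := hyj r
        rw [lt_div_iff₀ (hy o r)]
        simp only [hf_def] at this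
        nlinarith [hy o r]
      linarith
  · rintro ⟨j, hβ, hαβ⟩
    set α := alphaRatio x y o j with hα_def
    set β := betaRatio x y o j with hβ_def
    have hmax : max 1 α < β := max_lt hβ hαβ
    set δ : ℝ := (max 1 α + β) / 2 with hδ_def
    have hδ1 : 1 < δ := by
      have := le_max_left 1 α; simp only [hδ_def]; linarith
    have hδα : α < δ := by
      have := le_max_right 1 α; simp only [hδ_def]; linarith
    have hδβ : δ < β := by simp only [hδ_def]; linarith
    refine ⟨δ, hδ1, ?_⟩
    have hxlt : ∀ i, x j i < δ * x o i := by
      intro i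
      have h1 : x j i / x o i ≤ α := by
        rw [hα_def, alphaRatio]
        exact le_ciSup (f := fun i => x j i / x o i) (Set.Finite.bddAbove (Set.finite_range _)) i
      have := (div_le_iff₀ (hx o i)).mp h1
      nlinarith [hx o i]
    have hylt : ∀ r, δ * y o r < y j r := by
      intro r
      have h1 : β ≤ y j r / y o r := by
        rw [hβ_def, betaRatio]
        exact ciInf_le (f := fun r => y j r / y o r) (Set.Finite.bddBelow (Set.finite_range _)) r
      have := (le_div_iff₀ (hy o r)).mp h1
      nlinarith [hy o r]
    rw [mem_interior]
    refine ⟨{p | (∀ i, x j i < p.1 i) ∧ ∀ r, 0 < p.2 r ∧ p.2 r < y j r}, ?_, ?_, ?_⟩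
    · rintro p ⟨hp1, hp2⟩
      exact ⟨fun r => (hp2 r).1.le, j, fun i => (hp1 i).le, fun r => (hp2 r).2.le⟩
    · have h1 : IsOpen {p : (Fin m → ℝ) × (Fin s → ℝ) | ∀ i, x j i < p.1 i} := by
        rw [show {p : (Fin m → ℝ) × (Fin s → ℝ) | ∀ i, x j i < p.1 i}
            = ⋂ i, {p | x j i < p.1 i} by ext p; simp]
        exact isOpen_iInter_of_finite fun i =>
          isOpen_lt continuous_const ((continuous_apply i).comp continuous_fst)
      have h2 : IsOpen {p : (Fin m → ℝ) × (Fin s → ℝ) | ∀ r, 0 < p.2 r ∧ p.2 r < y j r} := by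
        rw [show {p : (Fin m → ℝ) × (Fin s → ℝ) | ∀ r, 0 < p.2 r ∧ p.2 r < y j r}
            = ⋂ r, ({p | 0 < p.2 r} ∩ {p | p.2 r < y j r}) by ext p; simp [forall_and]]
        refine isOpen_iInter_of_finite fun r => IsOpen.inter ?_ ?_
        · exact isOpen_lt continuous_const ((continuous_apply r).comp continuous_snd)
        · exact isOpen_lt ((continuous_apply r).comp continuous_snd) continuous_const
      exact (h1.inter h2 : _)
    · exact ⟨fun i => hxlt i, fun r =>
        ⟨mul_pos (by linarith) (hy o r), hylt r⟩⟩
end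
end

section
/- Let DMU_o = (x_o,y_o), o ∈ J, be FDH_V-efficient. Then Right-DRS prevails at DMU_o if and only if for every j ∈ J either β_{jo} ≤ 1 or β_{jo} < α_{jo}. -/
open Set

noncomputable section

/-- Right-DRS prevails at the FDH_V-efficient DMU_o iff for every
`j ∈ J`, `β_{jo} ≤ 1` or `β_{jo} < α_{jo}`. -/
theorem stmt5 {n m s : ℕ} (hm : 0 < m) (hs : 0 < s)
    (x : Fin n → Fin m → ℝ) (y : Fin n → Fin s → ℝ)
    (hx : ∀ j i, 0 < x j i) (hy : ∀ j r, 0 < y j r)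
    (o : Fin n) (heff : FDHEfficient x y o) :
    RightDRS x y o ↔
      ∀ j : Fin n, betaRatio x y o j ≤ 1 ∨ betaRatio x y o j < alphaRatio x y o j := by
  have hmne : Nonempty (Fin m) := ⟨⟨0, hm⟩⟩
  have hsne : Nonempty (Fin s) := ⟨⟨0, hs⟩⟩
  constructor
  · intro hdrs j
    by_contra h
    push_neg at h
    obtain ⟨h1, h2⟩ := h
    set δ := betaRatio x y o j with hδ
    refine hdrs δ h1 ⟨fun r => ?_, j, fun i => ?_, fun r => ?_⟩
    · exact le_of_lt (mul_pos (lt_trans one_pos h1) (hy o r))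
    · have hi : x j i / x o i ≤ alphaRatio x y o j :=
        le_ciSup (f := fun i => x j i / x o i)
          (Set.Finite.bddAbove (Set.finite_range _)) i
      have := hi.trans h2
      rwa [div_le_iff₀ (hx o i)] at this
    · have : δ ≤ y j r / y o r := ciInf_le (Set.Finite.bddBelow (Set.finite_range _)) r
      rwa [le_div_iff₀ (hy o r)] at this
  · rintro h δ hδ ⟨-, j, hxj, hyj⟩
    have hαδ : alphaRatio x y o j ≤ δ := by
      apply ciSup_le
      intro i
      rw [div_le_iff₀ (hx o i)]
      exact hxj i
    have hδβ : δ ≤ betaRatio x y o j := by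
      apply le_ciInf
      intro r
      rw [le_div_iff₀ (hy o r)]
      exact hyj r
    rcases h j with h1 | h1
    · exact absurd (hδ.trans_le hδβ) (not_lt.2 h1)
    · exact absurd (hαδ.trans hδβ) (not_le.2 h1)
end
end

section
/- Let DMU_o = (x_o,y_o), o ∈ J, be FDH_V-efficient. Then Right-CRS prevails at DMU_o if and only if both of the following hold: (a) for every j ∈ J, α_{jo} ≥ β_{jo} or β_{jo} ≤ 1; and (b) there exists j ∈ J with β_{jo} > 1 and β_{jo} ≥ α_{jo}. -/
open Set

noncomputable section

section Helpers

private lemma fin_sup_le_iff {m : ℕ} (hm : 0 < m) (f : Fin m → ℝ) (δ : ℝ) :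
    (⨆ i, f i) ≤ δ ↔ ∀ i, f i ≤ δ := by
  have : Nonempty (Fin m) := ⟨⟨0, hm⟩⟩
  exact ciSup_le_iff (Set.finite_range f).bddAbove

private lemma fin_sup_lt_iff {m : ℕ} (hm : 0 < m) (f : Fin m → ℝ) (δ : ℝ) :
    (⨆ i, f i) < δ ↔ ∀ i, f i < δ := by
  have : Nonempty (Fin m) := ⟨⟨0, hm⟩⟩
  constructor
  · intro h i
    exact lt_of_le_of_lt (le_ciSup (Set.finite_range f).bddAbove i) h
  · intro h
    obtain ⟨i0, hi0⟩ := Finite.exists_max f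
    have he : (⨆ i, f i) = f i0 :=
      le_antisymm (ciSup_le hi0) (le_ciSup (Set.finite_range f).bddAbove i0)
    rw [he]; exact h i0

private lemma fin_le_inf_iff {s : ℕ} (hs : 0 < s) (f : Fin s → ℝ) (δ : ℝ) :
    δ ≤ (⨅ r, f r) ↔ ∀ r, δ ≤ f r := by
  have : Nonempty (Fin s) := ⟨⟨0, hs⟩⟩
  exact le_ciInf_iff (Set.finite_range f).bddBelow

private lemma fin_lt_inf_iff {s : ℕ} (hs : 0 < s) (f : Fin s → ℝ) (δ : ℝ) :
    δ < (⨅ r, f r) ↔ ∀ r, δ < f r := by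
  have : Nonempty (Fin s) := ⟨⟨0, hs⟩⟩
  constructor
  · intro h r
    exact lt_of_lt_of_le h (ciInf_le (Set.finite_range f).bddBelow r)
  · intro h
    obtain ⟨r0, hr0⟩ := Finite.exists_min f
    have he : (⨅ r, f r) = f r0 :=
      le_antisymm (ciInf_le (Set.finite_range f).bddBelow r0) (le_ciInf hr0)
    rw [he]; exact h r0

private lemma mem_FDH_scale_iff {n m s : ℕ} (hm : 0 < m) (hs : 0 < s)
    (x : Fin n → Fin m → ℝ) (y : Fin n → Fin s → ℝ)
    (hx : ∀ j i, 0 < x j i) (hy : ∀ j r, 0 < y j r) (o : Fin n)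
    {δ : ℝ} (hδ : 0 < δ) :
    ((fun i => δ * x o i), (fun r => δ * y o r)) ∈ FDH x y ↔
      ∃ j : Fin n, alphaRatio x y o j ≤ δ ∧ δ ≤ betaRatio x y o j := by
  simp only [FDH, Set.mem_setOf_eq]
  constructor
  · rintro ⟨-, j, hj1, hj2⟩
    refine ⟨j, ?_, ?_⟩
    · rw [alphaRatio, fin_sup_le_iff hm]
      intro i
      exact (div_le_iff₀ (hx o i)).2 (hj1 i)
    · rw [betaRatio, fin_le_inf_iff hs]
      intro r
      exact (le_div_iff₀ (hy o r)).2 (hj2 r)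
  · rintro ⟨j, ha, hb⟩
    refine ⟨fun r => (mul_pos hδ (hy o r)).le, j, ?_, ?_⟩
    · intro i
      have := ((fin_sup_le_iff hm _ _).1 ha) i
      exact (div_le_iff₀ (hx o i)).1 this
    · intro r
      have := ((fin_le_inf_iff hs _ _).1 hb) r
      exact (le_div_iff₀ (hy o r)).1 this

private lemma mem_interior_FDH_scale_iff {n m s : ℕ} (hm : 0 < m) (hs : 0 < s)
    (x : Fin n → Fin m → ℝ) (y : Fin n → Fin s → ℝ)
    (hx : ∀ j i, 0 < x j i) (hy : ∀ j r, 0 < y j r) (o : Fin n)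
    {δ : ℝ} (hδ : 0 < δ) :
    ((fun i => δ * x o i), (fun r => δ * y o r)) ∈ interior (FDH x y) ↔
      ∃ j : Fin n, alphaRatio x y o j < δ ∧ δ < betaRatio x y o j := by
  constructor
  · intro h
    rw [mem_interior_iff_mem_nhds, Metric.mem_nhds_iff] at h
    obtain ⟨ε, hε, hball⟩ := h
    set p : (Fin m → ℝ) × (Fin s → ℝ) := ((fun i => δ * x o i), (fun r => δ * y o r)) with hp
    set q : (Fin m → ℝ) × (Fin s → ℝ) :=
      ((fun i => δ * x o i - ε / 2), (fun r => δ * y o r + ε / 2)) with hq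
    have hqball : q ∈ Metric.ball p ε := by
      rw [Metric.mem_ball]
      have h1 : dist q.1 p.1 ≤ ε / 2 := by
        rw [dist_pi_le_iff (by linarith)]
        intro i
        simp [hq, hp, Real.dist_eq]
        rw [abs_of_pos hε]
      have h2 : dist q.2 p.2 ≤ ε / 2 := by
        rw [dist_pi_le_iff (by linarith)]
        intro r
        simp [hq, hp, Real.dist_eq]
        rw [abs_of_pos hε]
      calc dist q p = max (dist q.1 p.1) (dist q.2 p.2) := Prod.dist_eq
        _ ≤ ε / 2 := max_le h1 h2
        _ < ε := by linarith
    obtain ⟨-, j, hj1, hj2⟩ := hball hqball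
    refine ⟨j, ?_, ?_⟩
    · rw [alphaRatio, fin_sup_lt_iff hm]
      intro i
      have := hj1 i
      simp only [hq] at this
      rw [div_lt_iff₀ (hx o i)]
      linarith
    · rw [betaRatio, fin_lt_inf_iff hs]
      intro r
      have := hj2 r
      simp only [hq] at this
      rw [lt_div_iff₀ (hy o r)]
      linarith
  · rintro ⟨j, ha, hb⟩
    set U : Set ((Fin m → ℝ) × (Fin s → ℝ)) :=
      {p | (∀ i, x j i < p.1 i) ∧ (∀ r, 0 < p.2 r) ∧ (∀ r, p.2 r < y j r)} with hUdef
    have hUopen : IsOpen U := by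
      have e : U = (⋂ i, {p : (Fin m → ℝ) × (Fin s → ℝ) | x j i < p.1 i}) ∩
          ((⋂ r, {p : (Fin m → ℝ) × (Fin s → ℝ) | 0 < p.2 r}) ∩
           (⋂ r, {p : (Fin m → ℝ) × (Fin s → ℝ) | p.2 r < y j r})) := by
        ext p
        simp only [hUdef, Set.mem_setOf_eq, Set.mem_inter_iff, Set.mem_iInter]
      rw [e]
      exact ((isOpen_iInter_of_finite fun i =>
          isOpen_lt continuous_const ((continuous_apply i).comp continuous_fst)).inter
        ((isOpen_iInter_of_finite fun r =>
          isOpen_lt continuous_const ((continuous_apply r).comp continuous_snd)).inter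
         (isOpen_iInter_of_finite fun r =>
          isOpen_lt (((continuous_apply r).comp continuous_snd :
            Continuous fun p : (Fin m → ℝ) × (Fin s → ℝ) => p.2 r)) continuous_const)))
    have hUsub : U ⊆ FDH x y := by
      rintro p ⟨h1, h2, h3⟩
      exact ⟨fun r => (h2 r).le, j, fun i => (h1 i).le, fun r => (h3 r).le⟩
    have hmem : ((fun i => δ * x o i), (fun r => δ * y o r)) ∈ U := by
      refine ⟨fun i => ?_, fun r => mul_pos hδ (hy o r), fun r => ?_⟩
      · have := ((fin_sup_lt_iff hm _ _).1 ha) i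
        exact (div_lt_iff₀ (hx o i)).1 this
      · have := ((fin_lt_inf_iff hs _ _).1 hb) r
        exact (lt_div_iff₀ (hy o r)).1 this
    exact interior_maximal hUsub hUopen hmem

end Helpers

/-- Right-CRS prevails at the FDH_V-efficient DMU_o iff
(a) for every `j`, `α_{jo} ≥ β_{jo}` or `β_{jo} ≤ 1`, and
(b) there exists `j` with `β_{jo} > 1` and `β_{jo} ≥ α_{jo}`. -/
theorem stmt6 {n m s : ℕ} (hm : 0 < m) (hs : 0 < s)
    (x : Fin n → Fin m → ℝ) (y : Fin n → Fin s → ℝ)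
    (hx : ∀ j i, 0 < x j i) (hy : ∀ j r, 0 < y j r)
    (o : Fin n) (heff : FDHEfficient x y o) :
    RightCRS x y o ↔
      (∀ j : Fin n, betaRatio x y o j ≤ alphaRatio x y o j ∨ betaRatio x y o j ≤ 1) ∧
      (∃ j : Fin n, 1 < betaRatio x y o j ∧ alphaRatio x y o j ≤ betaRatio x y o j) := by
  constructor
  · rintro ⟨hnirs, hndrs⟩
    constructor
    · -- (a) from ¬RightIRS
      intro j
      by_contra hcon
      push_neg at hcon
      obtain ⟨hab, hb1⟩ := hcon
      set α := alphaRatio x y o j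
      set β := betaRatio x y o j
      set δ := (max α 1 + β) / 2 with hδdef
      have hmaxlt : max α 1 < β := max_lt hab hb1
      have hδ1 : 1 < δ := by
        have : (1 : ℝ) ≤ max α 1 := le_max_right _ _
        simp only [hδdef]; linarith
      have hδpos : 0 < δ := lt_trans one_pos hδ1
      exact hnirs ⟨δ, hδ1,
        (mem_interior_FDH_scale_iff hm hs x y hx hy o hδpos).2
          ⟨j, by have := le_max_left α 1; simp only [hδdef]; linarith,
            by simp only [hδdef]; linarith⟩⟩
    · -- (b) from ¬RightDRS
      rw [RightDRS] at hndrs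
      push_neg at hndrs
      obtain ⟨δ, hδ1, hmem⟩ := hndrs
      obtain ⟨j, ha, hb⟩ :=
        (mem_FDH_scale_iff hm hs x y hx hy o (lt_trans one_pos hδ1)).1 hmem
      exact ⟨j, lt_of_lt_of_le hδ1 hb, le_trans ha hb⟩
  · rintro ⟨hA, j0, hb1, hab⟩
    constructor
    · -- ¬RightIRS
      rintro ⟨δ, hδ1, hmem⟩
      obtain ⟨j, ha, hb⟩ :=
        (mem_interior_FDH_scale_iff hm hs x y hx hy o (lt_trans one_pos hδ1)).1 hmem
      rcases hA j with h | h
      · exact absurd (lt_trans ha hb) (not_lt.2 h)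
      · exact absurd (lt_trans hδ1 hb) (not_lt.2 h)
    · -- ¬RightDRS
      intro hdrs
      have hpos : (0 : ℝ) < betaRatio x y o j0 := lt_trans one_pos hb1
      exact hdrs (betaRatio x y o j0) hb1
        ((mem_FDH_scale_iff hm hs x y hx hy o hpos).2 ⟨j0, hab, le_refl _⟩)
end
end

section
/- Let DMU_o = (x_o,y_o), o ∈ J, be FDH_V-efficient. Then Left-IRS prevails at DMU_o if and only if for every j ∈ J either α_{jo} ≥ 1 or β_{jo} < α_{jo}. -/
open Set

noncomputable section

/-- Left-IRS prevails at the FDH_V-efficient DMU_o iff for every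
`j ∈ J`, `α_{jo} ≥ 1` or `β_{jo} < α_{jo}`. -/
theorem stmt7 {n m s : ℕ} (hm : 0 < m) (hs : 0 < s)
    (x : Fin n → Fin m → ℝ) (y : Fin n → Fin s → ℝ)
    (hx : ∀ j i, 0 < x j i) (hy : ∀ j r, 0 < y j r)
    (o : Fin n) (heff : FDHEfficient x y o) :
    LeftIRS x y o ↔
      ∀ j : Fin n, 1 ≤ alphaRatio x y o j ∨ betaRatio x y o j < alphaRatio x y o j := by
  haveI : Nonempty (Fin m) := ⟨⟨0, hm⟩⟩
  haveI : Nonempty (Fin s) := ⟨⟨0, hs⟩⟩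
  constructor
  · intro h j
    by_contra hc
    push_neg at hc
    obtain ⟨hα, hβ⟩ := hc
    set α := alphaRatio x y o j with hαdef
    have hαpos : 0 < α := by
      have h1 : x j (⟨0, hm⟩ : Fin m) / x o ⟨0, hm⟩ ≤ α :=
        le_ciSup (f := fun i => x j i / x o i) (Finite.bddAbove_range _) _
      have h2 : 0 < x j (⟨0, hm⟩ : Fin m) / x o ⟨0, hm⟩ :=
        div_pos (hx j _) (hx o _)
      linarith
    refine h α hαpos hα ⟨fun r => mul_nonneg hαpos.le (hy o r).le, j, fun i => ?_, fun r => ?_⟩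
    · have h1 : x j i / x o i ≤ α := le_ciSup (f := fun i => x j i / x o i) (Finite.bddAbove_range _) i
      exact (div_le_iff₀ (hx o i)).mp h1
    · have h1 : betaRatio x y o j ≤ y j r / y o r := ciInf_le (f := fun r => y j r / y o r) (Finite.bddBelow_range _) r
      have h2 : α ≤ y j r / y o r := le_trans hβ h1
      exact (le_div_iff₀ (hy o r)).mp h2
  · rintro h δ hδ0 hδ1 ⟨-, j, hxle, hyle⟩
    have hαle : alphaRatio x y o j ≤ δ :=
      ciSup_le fun i => (div_le_iff₀ (hx o i)).mpr (hxle i)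
    have hβge : δ ≤ betaRatio x y o j :=
      le_ciInf fun r => (le_div_iff₀ (hy o r)).mpr (hyle r)
    rcases h j with h1 | h2 <;> linarith
end
end

section
/- Let DMU_o = (x_o,y_o), o ∈ J, be FDH_V-efficient. Then Left-DRS prevails at DMU_o if and only if there exists j ∈ J such that α_{jo} < 1 and α_{jo} < β_{jo}. -/
open Set

noncomputable section

/-- Left-DRS prevails at the FDH_V-efficient DMU_o iff there exists
`j ∈ J` with `α_{jo} < 1` and `α_{jo} < β_{jo}`. -/
theorem stmt8 {n m s : ℕ} (hm : 0 < m) (hs : 0 < s)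
    (x : Fin n → Fin m → ℝ) (y : Fin n → Fin s → ℝ)
    (hx : ∀ j i, 0 < x j i) (hy : ∀ j r, 0 < y j r)
    (o : Fin n) (heff : FDHEfficient x y o) :
    LeftDRS x y o ↔
      ∃ j : Fin n, alphaRatio x y o j < 1 ∧ alphaRatio x y o j < betaRatio x y o j := by
  haveI : Nonempty (Fin m) := Fin.pos_iff_nonempty.mp hm
  haveI : Nonempty (Fin s) := Fin.pos_iff_nonempty.mp hs
  constructor
  · rintro ⟨δ, hδ0, hδ1, hint⟩
    rw [mem_interior_iff_mem_nhds, Metric.mem_nhds_iff] at hint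
    obtain ⟨ε, hε, hball⟩ := hint
    set c := ε / 2 with hc
    have hc0 : 0 < c := by positivity
    have hmem : (((fun i => δ * x o i - c) : Fin m → ℝ),
        ((fun r => δ * y o r + c) : Fin s → ℝ)) ∈ FDH x y := by
      apply hball
      rw [Metric.mem_ball, Prod.dist_eq]
      apply max_lt
      · refine lt_of_le_of_lt ((dist_pi_le_iff hc0.le).2 fun i => ?_) (by linarith)
        rw [Real.dist_eq]
        have : δ * x o i - c - δ * x o i = -c := by ring
        rw [this, abs_neg, abs_of_pos hc0]
      · refine lt_of_le_of_lt ((dist_pi_le_iff hc0.le).2 fun r => ?_) (by linarith)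
        rw [Real.dist_eq]
        have : δ * y o r + c - δ * y o r = c := by ring
        rw [this, abs_of_pos hc0]
    obtain ⟨hpos, j, hxj, hyj⟩ := hmem
    refine ⟨j, ?_, ?_⟩
    · have hαδ : alphaRatio x y o j < δ := by
        obtain ⟨i₀, hi₀⟩ := exists_eq_ciSup_of_finite (f := fun i => x j i / x o i)
        rw [alphaRatio, ← hi₀, div_lt_iff₀ (hx o i₀)]
        have h : x j i₀ ≤ δ * x o i₀ - c := hxj i₀
        linarith
      linarith
    · have hαδ : alphaRatio x y o j < δ := by
        obtain ⟨i₀, hi₀⟩ := exists_eq_ciSup_of_finite (f := fun i => x j i / x o i)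
        rw [alphaRatio, ← hi₀, div_lt_iff₀ (hx o i₀)]
        have h : x j i₀ ≤ δ * x o i₀ - c := hxj i₀
        linarith
      have hδβ : δ < betaRatio x y o j := by
        obtain ⟨r₀, hr₀⟩ := exists_eq_ciInf_of_finite (f := fun r => y j r / y o r)
        rw [betaRatio, ← hr₀, lt_div_iff₀ (hy o r₀)]
        have h : δ * y o r₀ + c ≤ y j r₀ := hyj r₀
        linarith
      linarith
  · rintro ⟨j, hα1, hαβ⟩
    have hbdd : BddAbove (Set.range fun i => x j i / x o i) := (Set.finite_range _).bddAbove
    have hbddb : BddBelow (Set.range fun r => y j r / y o r) := (Set.finite_range _).bddBelow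
    have hα0 : 0 < alphaRatio x y o j := by
      have h1 : (0 : ℝ) < x j ⟨0, hm⟩ / x o ⟨0, hm⟩ := div_pos (hx j _) (hx o _)
      exact lt_of_lt_of_le h1 (le_ciSup hbdd ⟨0, hm⟩)
    set A := alphaRatio x y o j with hA
    set B := min 1 (betaRatio x y o j) with hB
    have hAB : A < B := lt_min hα1 hαβ
    set δ := (A + B) / 2 with hδ
    have h1 : A < δ := by rw [hδ]; linarith
    have h2 : δ < B := by rw [hδ]; linarith
    have hδ0 : 0 < δ := lt_trans hα0 h1
    refine ⟨δ, hδ0, lt_of_lt_of_le h2 (min_le_left _ _), ?_⟩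
    set U : Set ((Fin m → ℝ) × (Fin s → ℝ)) :=
      {p | (∀ i, x j i < p.1 i) ∧ ∀ r, 0 < p.2 r ∧ p.2 r < y j r} with hU
    have hopen : IsOpen U := by
      have hUeq : U = (⋂ i, {p : (Fin m → ℝ) × (Fin s → ℝ) | x j i < p.1 i}) ∩
          ((⋂ r, {p : (Fin m → ℝ) × (Fin s → ℝ) | 0 < p.2 r}) ∩
            (⋂ r, {p : (Fin m → ℝ) × (Fin s → ℝ) | p.2 r < y j r})) := by
        ext p
        simp only [hU, Set.mem_setOf_eq, Set.mem_inter_iff, Set.mem_iInter]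
        exact ⟨fun ⟨h1, h2⟩ => ⟨h1, fun r => (h2 r).1, fun r => (h2 r).2⟩,
          fun ⟨h1, h2, h3⟩ => ⟨h1, fun r => ⟨h2 r, h3 r⟩⟩⟩
      rw [hUeq]
      refine (isOpen_iInter_of_finite fun i => ?_).inter
        ((isOpen_iInter_of_finite fun r => ?_).inter (isOpen_iInter_of_finite fun r => ?_))
      · exact isOpen_lt continuous_const ((continuous_apply i).comp continuous_fst)
      · exact isOpen_lt continuous_const ((continuous_apply r).comp continuous_snd)
      · exact isOpen_lt ((continuous_apply r).comp continuous_snd) continuous_const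
    have hsub : U ⊆ FDH x y := by
      rintro ⟨u, v⟩ ⟨h1, h2⟩
      exact ⟨fun r => (h2 r).1.le, j, fun i => (h1 i).le, fun r => (h2 r).2.le⟩
    apply interior_maximal hsub hopen
    constructor
    · intro i
      have hle : x j i / x o i ≤ A := le_ciSup hbdd i
      exact (div_lt_iff₀ (hx o i)).mp (lt_of_le_of_lt hle h1)
    · intro r
      refine ⟨mul_pos hδ0 (hy o r), ?_⟩
      have hle : betaRatio x y o j ≤ y j r / y o r := ciInf_le hbddb r
      have : δ < y j r / y o r :=
        lt_of_lt_of_le (lt_of_lt_of_le h2 (min_le_right _ _)) hle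
      exact (lt_div_iff₀ (hy o r)).mp this
end
end

section
/- Let DMU_o = (x_o,y_o), o ∈ J, be FDH_V-efficient. Then Left-CRS prevails at DMU_o if and only if both of the following hold: (a) there exists j ∈ J with α_{jo} < 1 and β_{jo} ≥ α_{jo}; and (b) for every j ∈ J, α_{jo} ≥ 1 or α_{jo} ≥ β_{jo}. -/
open Set

noncomputable section

section Aux

variable {n m s : ℕ} (x : Fin n → Fin m → ℝ) (y : Fin n → Fin s → ℝ) (o j : Fin n)

lemma alphaRatio_le_iff (hm : 0 < m) (hx : ∀ j i, 0 < x j i) {δ : ℝ} :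
    alphaRatio x y o j ≤ δ ↔ ∀ i, x j i ≤ δ * x o i := by
  haveI : Nonempty (Fin m) := Fin.pos_iff_nonempty.1 hm
  rw [alphaRatio, ciSup_le_iff ((Set.finite_range _).bddAbove)]
  exact forall_congr' fun i => div_le_iff₀ (hx o i)

lemma le_betaRatio_iff (hs : 0 < s) (hy : ∀ j r, 0 < y j r) {δ : ℝ} :
    δ ≤ betaRatio x y o j ↔ ∀ r, δ * y o r ≤ y j r := by
  haveI : Nonempty (Fin s) := Fin.pos_iff_nonempty.1 hs
  rw [betaRatio, le_ciInf_iff ((Set.finite_range _).bddBelow)]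
  exact forall_congr' fun r => le_div_iff₀ (hy o r)

lemma div_le_alphaRatio (i : Fin m) : x j i / x o i ≤ alphaRatio x y o j :=
  le_ciSup (f := fun i => x j i / x o i) ((Set.finite_range _).bddAbove) i

lemma betaRatio_le_div (r : Fin s) : betaRatio x y o j ≤ y j r / y o r :=
  ciInf_le (f := fun r => y j r / y o r) ((Set.finite_range _).bddBelow) r

lemma alphaRatio_pos (hm : 0 < m) (hx : ∀ j i, 0 < x j i) :
    0 < alphaRatio x y o j := by
  have i : Fin m := ⟨0, hm⟩
  exact lt_of_lt_of_le (div_pos (hx j i) (hx o i)) (div_le_alphaRatio x y o j i)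

lemma mem_FDH_iff (hm : 0 < m) (hs : 0 < s)
    (hx : ∀ j i, 0 < x j i) (hy : ∀ j r, 0 < y j r) {δ : ℝ} (hδ : 0 < δ) :
    ((fun i => δ * x o i), (fun r => δ * y o r)) ∈ FDH x y ↔
      ∃ j : Fin n, alphaRatio x y o j ≤ δ ∧ δ ≤ betaRatio x y o j := by
  constructor
  · rintro ⟨-, j, h1, h2⟩
    exact ⟨j, (alphaRatio_le_iff x y o j hm hx).2 h1,
      (le_betaRatio_iff x y o j hs hy).2 h2⟩
  · rintro ⟨j, h1, h2⟩
    exact ⟨fun r => le_of_lt (mul_pos hδ (hy o r)),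
      j, (alphaRatio_le_iff x y o j hm hx).1 h1,
      (le_betaRatio_iff x y o j hs hy).1 h2⟩

lemma mem_interior_FDH_iff (hm : 0 < m) (hs : 0 < s)
    (hx : ∀ j i, 0 < x j i) (hy : ∀ j r, 0 < y j r) {δ : ℝ} (hδ : 0 < δ) :
    ((fun i => δ * x o i), (fun r => δ * y o r)) ∈ interior (FDH x y) ↔
      ∃ j : Fin n, alphaRatio x y o j < δ ∧ δ < betaRatio x y o j := by
  constructor
  · intro hp
    set f : ℝ → (Fin m → ℝ) × (Fin s → ℝ) :=
      fun t => ((fun i => (δ - t) * x o i), (fun r => (δ + t) * y o r)) with hf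
    have hfc : Continuous f := by
      apply Continuous.prodMk <;> exact continuous_pi fun i => by fun_prop
    have hf0 : f 0 = ((fun i => δ * x o i), (fun r => δ * y o r)) := by
      simp [hf]
    have htend : Filter.Tendsto f (nhds 0)
        (nhds ((fun i => δ * x o i), (fun r => δ * y o r))) := by
      rw [← hf0]; exact hfc.tendsto 0
    have hev : ∀ᶠ t in nhds (0:ℝ), f t ∈ interior (FDH x y) :=
      htend.eventually (isOpen_interior.mem_nhds hp)
    rw [Metric.eventually_nhds_iff] at hev
    obtain ⟨ε, hε, hball⟩ := hev
    have ht : f (ε/2) ∈ FDH x y := by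
      refine interior_subset (hball ?_)
      rw [Real.dist_eq, sub_zero, abs_of_pos (by linarith)]
      linarith
    obtain ⟨-, jj, h1, h2⟩ := ht
    refine ⟨jj, ?_, ?_⟩
    · have := (alphaRatio_le_iff x y o jj hm hx).2 h1
      linarith
    · have := (le_betaRatio_iff x y o jj hs hy).2 h2
      linarith
  · rintro ⟨j, h1, h2⟩
    apply mem_interior.2
    refine ⟨{q : (Fin m → ℝ) × (Fin s → ℝ) |
        (∀ i, x j i < q.1 i) ∧ ∀ r, 0 < q.2 r ∧ q.2 r < y j r}, ?_, ?_, ?_, ?_⟩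
    · rintro q ⟨hq1, hq2⟩
      exact ⟨fun r => le_of_lt (hq2 r).1, j, fun i => le_of_lt (hq1 i),
        fun r => le_of_lt (hq2 r).2⟩
    · have e : {q : (Fin m → ℝ) × (Fin s → ℝ) |
          (∀ i, x j i < q.1 i) ∧ ∀ r, 0 < q.2 r ∧ q.2 r < y j r}
          = (⋂ i, {q : (Fin m → ℝ) × (Fin s → ℝ) | x j i < q.1 i}) ∩
            ((⋂ r, {q : (Fin m → ℝ) × (Fin s → ℝ) | 0 < q.2 r}) ∩
             (⋂ r, {q : (Fin m → ℝ) × (Fin s → ℝ) | q.2 r < y j r})) := by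
        ext q; simp [forall_and]
      rw [e]
      refine IsOpen.inter (isOpen_iInter_of_finite fun i => ?_)
        (IsOpen.inter (isOpen_iInter_of_finite fun r => ?_)
          (isOpen_iInter_of_finite fun r => ?_))
      · exact isOpen_lt continuous_const ((continuous_apply i).comp continuous_fst)
      · exact isOpen_lt continuous_const ((continuous_apply r).comp continuous_snd)
      · exact isOpen_lt ((continuous_apply r).comp continuous_snd) continuous_const
    · intro i
      have := lt_of_le_of_lt (div_le_alphaRatio x y o j i) h1
      exact (div_lt_iff₀ (hx o i)).1 this
    · intro r
      refine ⟨mul_pos hδ (hy o r), ?_⟩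
      have := lt_of_lt_of_le h2 (betaRatio_le_div x y o j r)
      exact (lt_div_iff₀ (hy o r)).1 this

end Aux

/-- Left-CRS prevails at the FDH_V-efficient DMU_o iff
(a) there exists `j` with `α_{jo} < 1` and `β_{jo} ≥ α_{jo}`, and
(b) for every `j`, `α_{jo} ≥ 1` or `α_{jo} ≥ β_{jo}`. -/
theorem stmt9 {n m s : ℕ} (hm : 0 < m) (hs : 0 < s)
    (x : Fin n → Fin m → ℝ) (y : Fin n → Fin s → ℝ)
    (hx : ∀ j i, 0 < x j i) (hy : ∀ j r, 0 < y j r)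
    (o : Fin n) (heff : FDHEfficient x y o) :
    LeftCRS x y o ↔
      (∃ j : Fin n, alphaRatio x y o j < 1 ∧ alphaRatio x y o j ≤ betaRatio x y o j) ∧
      (∀ j : Fin n, 1 ≤ alphaRatio x y o j ∨ betaRatio x y o j ≤ alphaRatio x y o j) := by
  unfold LeftCRS
  constructor
  · rintro ⟨hIRS, hDRS⟩
    constructor
    · unfold LeftIRS at hIRS
      push_neg at hIRS
      obtain ⟨δ, hδ0, hδ1, hmem⟩ := hIRS
      obtain ⟨j, h1, h2⟩ := (mem_FDH_iff x y o hm hs hx hy hδ0).1 hmem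
      exact ⟨j, lt_of_le_of_lt h1 hδ1, le_trans h1 h2⟩
    · intro j
      by_contra hc
      push_neg at hc
      obtain ⟨h1, h2⟩ := hc
      have hα : 0 < alphaRatio x y o j := alphaRatio_pos x y o j hm hx
      set δ : ℝ := (alphaRatio x y o j + min 1 (betaRatio x y o j)) / 2 with hδ
      have hmin : alphaRatio x y o j < min 1 (betaRatio x y o j) := lt_min h1 h2
      have hδα : alphaRatio x y o j < δ := by rw [hδ]; linarith
      have hδ0 : 0 < δ := lt_trans hα hδα
      have hδ1 : δ < 1 := by
        have := min_le_left 1 (betaRatio x y o j); rw [hδ]; linarith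
      have hδβ : δ < betaRatio x y o j := by
        have := min_le_right 1 (betaRatio x y o j); rw [hδ]; linarith
      exact hDRS ⟨δ, hδ0, hδ1,
        (mem_interior_FDH_iff x y o hm hs hx hy hδ0).2 ⟨j, hδα, hδβ⟩⟩
  · rintro ⟨⟨j, hj1, hj2⟩, hb⟩
    constructor
    · intro hIRS
      have hα : 0 < alphaRatio x y o j := alphaRatio_pos x y o j hm hx
      exact hIRS (alphaRatio x y o j) hα hj1
        ((mem_FDH_iff x y o hm hs hx hy hα).2 ⟨j, le_refl _, hj2⟩)
    · rintro ⟨δ, hδ0, hδ1, hint⟩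
      obtain ⟨k, h1, h2⟩ := (mem_interior_FDH_iff x y o hm hs hx hy hδ0).1 hint
      rcases hb k with h | h
      · linarith
      · linarith
end
end

section
/- Let DMU_o = (x_o,y_o), o ∈ J, be FDH_V-efficient. Then Right-IRS prevails at DMU_o if and only if σ_o^+ > 1. -/
open Set

noncomputable section

/-- Right-IRS at the FDH_V-efficient DMU_o iff `σ_o^+ > 1`. -/
theorem stmt10 {n m s : ℕ} (hm : 0 < m) (hs : 0 < s)
    (x : Fin n → Fin m → ℝ) (y : Fin n → Fin s → ℝ)
    (hx : ∀ j i, 0 < x j i) (hy : ∀ j r, 0 < y j r)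
    (o : Fin n) (heff : FDHEfficient x y o) :
    RightIRS x y o ↔ 1 < sigmaPlus x y o := by

  haveI hns : Nonempty (Fin s) := ⟨⟨0, hs⟩⟩
  haveI hnm : Nonempty (Fin m) := ⟨⟨0, hm⟩⟩
  haveI hnn : Nonempty (Fin n) := ⟨o⟩
  set bR : Fin n → ℝ := betaRatio x y o with hbRdef
  set aR : Fin n → ℝ := alphaRatio x y o with haRdef
  set B : ℝ := ⨆ j, bR j with hBdef
  -- membership characterization
  have hmem : ∀ α β : ℝ, ((fun i => α * x o i), (fun r => β * y o r)) ∈ FDH x y ↔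
      0 ≤ β ∧ ∃ j, (∀ i, x j i ≤ α * x o i) ∧ β ≤ bR j := by
    intro α β
    constructor
    · rintro ⟨h0, j, hxj, hyj⟩
      have hb : 0 ≤ β := by
        have h1 : 0 ≤ β * y o ⟨0, hs⟩ := h0 ⟨0, hs⟩
        nlinarith [hy o ⟨0, hs⟩]
      refine ⟨hb, j, hxj, le_ciInf fun r => ?_⟩
      rw [le_div_iff₀ (hy o r)]
      exact hyj r
    · rintro ⟨hb, j, hxj, hyj⟩
      refine ⟨fun r => mul_nonneg hb (hy o r).le, j, hxj, fun r => ?_⟩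
      have h1 : β ≤ y j r / y o r := hyj.trans (ciInf_le (Finite.bddBelow_range _) r)
      rw [le_div_iff₀ (hy o r)] at h1
      exact h1
  have hbRo : bR o = 1 := by
    apply le_antisymm
    · have := ciInf_le (Finite.bddBelow_range fun r => y o r / y o r) (⟨0, hs⟩ : Fin s)
      simp only [div_self (hy o ⟨0, hs⟩).ne'] at this
      exact this
    · exact le_ciInf fun r => (div_self (hy o r).ne').ge
  have hbB : ∀ j, bR j ≤ B := fun j => le_ciSup (Finite.bddAbove_range _) j
  have hB1 : (1:ℝ) ≤ B := hbRo ▸ hbB o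
  have hbdd : ∀ α : ℝ, BddAbove {β : ℝ |
      ((fun i => α * x o i), (fun r => β * y o r)) ∈ FDH x y} := by
    intro α
    refine ⟨B, fun β hβ => ?_⟩
    obtain ⟨_, j, _, h⟩ := (hmem α β).mp hβ
    exact h.trans (hbB j)
  have hone : ∀ α : ℝ, 1 ≤ α → (1:ℝ) ∈ {β : ℝ |
      ((fun i => α * x o i), (fun r => β * y o r)) ∈ FDH x y} := by
    intro α hα
    exact (hmem α 1).mpr ⟨zero_le_one, o,
      fun i => le_mul_of_one_le_left (hx o i).le hα, hbRo.ge⟩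
  have hresp_ge : ∀ α : ℝ, 1 ≤ α → 1 ≤ respFun x y o α :=
    fun α hα => le_csSup (hbdd α) (hone α hα)
  have hresp_le : ∀ α : ℝ, 1 ≤ α → respFun x y o α ≤ B := by
    intro α hα
    refine csSup_le ⟨1, hone α hα⟩ fun β hβ => ?_
    obtain ⟨_, j, _, h⟩ := (hmem α β).mp hβ
    exact h.trans (hbB j)
  -- efficiency consequence
  have heffb : ∀ j, (∀ i, x j i ≤ x o i) → bR j ≤ 1 := by
    intro j hj
    by_contra hc
    push_neg at hc
    have hlt : ∀ r, y o r < y j r := by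
      intro r
      have h1 : bR j ≤ y j r / y o r := ciInf_le (Finite.bddBelow_range _) r
      have h2 : 1 < y j r / y o r := lt_of_lt_of_le hc h1
      rw [lt_div_iff₀ (hy o r)] at h2
      linarith
    apply heff
    refine ⟨(x o, y j), ⟨fun r => (hy j r).le, j, hj, fun r => le_rfl⟩,
      fun i => le_rfl, fun r => (hlt r).le, ?_⟩
    intro h
    have h2 : y j = y o := congrArg Prod.snd h
    have := hlt ⟨0, hs⟩
    rw [h2] at this
    exact lt_irrefl _ this
  -- boundedness of the ratio set
  have hC : BddAbove {ρ : ℝ | ∃ α : ℝ, 1 < α ∧ ρ = (respFun x y o α - 1) / (α - 1)} := by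
    refine ⟨max 0 (⨆ j, (B - 1) / (aR j - 1)), ?_⟩
    rintro ρ ⟨α, hα, rfl⟩
    have hα1 : (0:ℝ) < α - 1 := by linarith
    rcases le_or_gt (respFun x y o α) 1 with hle | hgt
    · exact le_max_of_le_left (div_nonpos_of_nonpos_of_nonneg (by linarith) hα1.le)
    · obtain ⟨β, hβmem, hβ1⟩ := exists_lt_of_lt_csSup ⟨1, hone α hα.le⟩ hgt
      obtain ⟨hβ0, j, hxj, hbj⟩ := (hmem α β).mp hβmem
      have hbj1 : 1 < bR j := lt_of_lt_of_le hβ1 hbj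
      have hnle : ¬ ∀ i, x j i ≤ x o i := fun h => absurd (heffb j h) (not_le.mpr hbj1)
      push_neg at hnle
      obtain ⟨i0, hi0⟩ := hnle
      have haRle : aR j ≤ α := by
        refine ciSup_le fun i => ?_
        rw [div_le_iff₀ (hx o i)]
        exact hxj i
      have haR1 : 1 < aR j := by
        have h1 : 1 < x j i0 / x o i0 := (one_lt_div (hx o i0)).mpr hi0
        have h2 : x j i0 / x o i0 ≤ aR j :=
          le_ciSup (f := fun i => x j i / x o i) (Finite.bddAbove_range _) i0
        linarith
      have hstep1 : (respFun x y o α - 1) / (α - 1) ≤ (B - 1) / (α - 1) := by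
        apply (div_le_div_iff_of_pos_right hα1).mpr
        linarith [hresp_le α hα.le]
      have hstep2 : (B - 1) / (α - 1) ≤ (B - 1) / (aR j - 1) := by
        apply div_le_div_of_nonneg_left (by linarith) (by linarith) (by linarith)
      have hstep3 : (B - 1) / (aR j - 1) ≤ ⨆ k, (B - 1) / (aR k - 1) :=
        le_ciSup (f := fun k => (B - 1) / (aR k - 1)) (Finite.bddAbove_range _) j
      exact le_max_of_le_right (by linarith)
  constructor
  · rintro ⟨δ, hδ, hint⟩
    have hcont : Continuous (fun t : ℝ =>
        ((fun i => δ * x o i), fun r => t * y o r) : ℝ → (Fin m → ℝ) × (Fin s → ℝ)) := by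
      refine Continuous.prodMk continuous_const (continuous_pi fun r => ?_)
      exact continuous_id.mul continuous_const
    have hopen : IsOpen ((fun t : ℝ =>
        ((fun i => δ * x o i), fun r => t * y o r) : ℝ → (Fin m → ℝ) × (Fin s → ℝ)) ⁻¹'
        interior (FDH x y)) := isOpen_interior.preimage hcont
    obtain ⟨ε, hε, hball⟩ := Metric.isOpen_iff.mp hopen δ hint
    have htball : (δ + ε / 2) ∈ Metric.ball δ ε := by
      rw [Metric.mem_ball, Real.dist_eq, show δ + ε / 2 - δ = ε / 2 by ring,
        abs_of_pos (by linarith : (0:ℝ) < ε / 2)]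
      linarith
    have htmem : ((fun i => δ * x o i), fun r => (δ + ε / 2) * y o r) ∈ FDH x y :=
      interior_subset (hball htball)
    have hge : δ + ε / 2 ≤ respFun x y o δ := le_csSup (hbdd δ) htmem
    have hρ1 : 1 < (respFun x y o δ - 1) / (δ - 1) := by
      rw [lt_div_iff₀ (by linarith : (0:ℝ) < δ - 1)]
      linarith
    calc (1:ℝ) < (respFun x y o δ - 1) / (δ - 1) := hρ1
      _ ≤ sigmaPlus x y o := le_csSup hC ⟨δ, hδ, rfl⟩
  · intro hσ
    have hne : Set.Nonempty {ρ : ℝ | ∃ α : ℝ, 1 < α ∧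
        ρ = (respFun x y o α - 1) / (α - 1)} := ⟨_, 2, one_lt_two, rfl⟩
    obtain ⟨ρ, ⟨α, hα, hρ⟩, hρ1⟩ := exists_lt_of_lt_csSup hne hσ
    have hα1 : (0:ℝ) < α - 1 := by linarith
    have hra : α < respFun x y o α := by
      rw [hρ, lt_div_iff₀ hα1] at hρ1
      linarith
    obtain ⟨β, hβmem, hβα⟩ := exists_lt_of_lt_csSup ⟨1, hone α hα.le⟩ hra
    obtain ⟨hβ0, j, hxj, hbj⟩ := (hmem α β).mp hβmem
    set δ := (α + β) / 2 with hδdef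
    have hδα : α < δ := by rw [hδdef]; linarith
    have hδβ : δ < β := by rw [hδdef]; linarith
    have hδ1 : 1 < δ := hα.trans hδα
    refine ⟨δ, hδ1, ?_⟩
    have hUopen : IsOpen ({p : (Fin m → ℝ) × (Fin s → ℝ) | ∀ i, x j i < p.1 i} ∩
        {p | ∀ r, 0 < p.2 r ∧ p.2 r < y j r}) := by
      apply IsOpen.inter
      · have heq : {p : (Fin m → ℝ) × (Fin s → ℝ) | ∀ i, x j i < p.1 i}
            = ⋂ i, (fun p : (Fin m → ℝ) × (Fin s → ℝ) => p.1 i) ⁻¹' Set.Ioi (x j i) := by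
          ext p; simp [Set.mem_iInter]
        rw [heq]
        exact isOpen_iInter_of_finite fun i =>
          isOpen_Ioi.preimage ((continuous_apply i).comp continuous_fst)
      · have heq : {p : (Fin m → ℝ) × (Fin s → ℝ) | ∀ r, 0 < p.2 r ∧ p.2 r < y j r}
            = ⋂ r, (fun p : (Fin m → ℝ) × (Fin s → ℝ) => p.2 r) ⁻¹' Set.Ioo 0 (y j r) := by
          ext p; simp [Set.mem_iInter, Set.mem_Ioo]
        rw [heq]
        exact isOpen_iInter_of_finite fun r =>
          isOpen_Ioo.preimage ((continuous_apply r).comp continuous_snd)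
    have hUsub : ({p : (Fin m → ℝ) × (Fin s → ℝ) | ∀ i, x j i < p.1 i} ∩
        {p | ∀ r, 0 < p.2 r ∧ p.2 r < y j r}) ⊆ FDH x y := by
      rintro p ⟨h1, h2⟩
      exact ⟨fun r => (h2 r).1.le, j, fun i => (h1 i).le, fun r => (h2 r).2.le⟩
    have hpt : ((fun i => δ * x o i), (fun r => δ * y o r)) ∈
        ({p : (Fin m → ℝ) × (Fin s → ℝ) | ∀ i, x j i < p.1 i} ∩
        {p | ∀ r, 0 < p.2 r ∧ p.2 r < y j r}) := by
      constructor
      · intro i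
        show x j i < δ * x o i
        have h1 := hxj i
        nlinarith [hx o i]
      · intro r
        show 0 < δ * y o r ∧ δ * y o r < y j r
        refine ⟨mul_pos (by linarith) (hy o r), ?_⟩
        have hδb : δ < bR j := lt_of_lt_of_le hδβ hbj
        have h1 : bR j ≤ y j r / y o r := ciInf_le (Finite.bddBelow_range _) r
        have h2 : δ < y j r / y o r := lt_of_lt_of_le hδb h1
        rw [lt_div_iff₀ (hy o r)] at h2
        exact h2
    exact interior_maximal hUsub hUopen hpt
end
end

section
/- Let DMU_o = (x_o,y_o), o ∈ J, be FDH_V-efficient. Then Right-DRS prevails at DMU_o if and only if σ_o^+ < 1. -/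
open Set

noncomputable section

/-- Right-DRS at the FDH_V-efficient DMU_o iff `σ_o^+ < 1`. -/
theorem stmt11 {n m s : ℕ} (hm : 0 < m) (hs : 0 < s)
    (x : Fin n → Fin m → ℝ) (y : Fin n → Fin s → ℝ)
    (hx : ∀ j i, 0 < x j i) (hy : ∀ j r, 0 < y j r)
    (o : Fin n) (heff : FDHEfficient x y o) :
    RightDRS x y o ↔ sigmaPlus x y o < 1 := by
  classical
  have hmne : (Finset.univ : Finset (Fin m)).Nonempty := ⟨⟨0, hm⟩, Finset.mem_univ _⟩
  have hsne : (Finset.univ : Finset (Fin s)).Nonempty := ⟨⟨0, hs⟩, Finset.mem_univ _⟩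
  set a : Fin n → ℝ := fun j => Finset.univ.sup' hmne (fun i => x j i / x o i) with hadef
  set b : Fin n → ℝ := fun j => Finset.univ.inf' hsne (fun r => y j r / y o r) with hbdef
  have ha_iff : ∀ (j : Fin n) (α : ℝ), (∀ i, x j i ≤ α * x o i) ↔ a j ≤ α := by
    intro j α
    rw [hadef]
    rw [Finset.sup'_le_iff]
    constructor
    · intro h i _
      rw [div_le_iff₀ (hx o i)]
      have := h i; linarith [h i]
    · intro h i
      have := h i (Finset.mem_univ i)
      rw [div_le_iff₀ (hx o i)] at this
      linarith
  have hb_iff : ∀ (j : Fin n) (β : ℝ), (∀ r, β * y o r ≤ y j r) ↔ β ≤ b j := by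
    intro j β
    rw [hbdef]
    rw [Finset.le_inf'_iff]
    constructor
    · intro h r _
      rw [le_div_iff₀ (hy o r)]
      exact h r
    · intro h r
      have := h r (Finset.mem_univ r)
      rw [le_div_iff₀ (hy o r)] at this
      exact this
  have hb_pos : ∀ j, 0 < b j := by
    intro j
    rw [hbdef]
    rw [Finset.lt_inf'_iff]
    intro r _
    exact div_pos (hy j r) (hy o r)
  -- efficiency consequence
  have eff : ∀ j, 1 < b j → 1 < a j := by
    intro j hbj
    by_contra h
    push_neg at h
    have hxj : ∀ i, x j i ≤ x o i := by
      intro i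
      have := (ha_iff j 1).mpr h i
      linarith
    have hyj : ∀ r, y o r < y j r := by
      intro r
      have h1 : b j ≤ y j r / y o r := by
        rw [hbdef]; exact Finset.inf'_le _ (Finset.mem_univ r)
      have h2 : 1 < y j r / y o r := lt_of_lt_of_le hbj h1
      rw [lt_div_iff₀ (hy o r)] at h2
      linarith
    apply heff
    refine ⟨(x o, y j), ⟨fun r => (hy j r).le, j, hxj, fun r => le_rfl⟩,
      fun i => le_rfl, fun r => (hyj r).le, ?_⟩
    intro hEq
    have := congrFun (congrArg Prod.snd hEq) ⟨0, hs⟩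
    simp only at this
    have := hyj ⟨0, hs⟩
    linarith
  set c : Fin n → ℝ := fun j => if 1 < b j then (b j - 1) / (a j - 1) else 0 with hcdef
  set C : ℝ := max (Finset.univ.sup' ⟨o, Finset.mem_univ o⟩ c) 0 with hCdef
  have hC0 : 0 ≤ C := le_max_right _ _
  have hcC : ∀ j, c j ≤ C :=
    fun j => le_trans (Finset.le_sup' c (Finset.mem_univ j)) (le_max_left _ _)
  -- key bound for the response set
  have key : ∀ α : ℝ, 1 < α → ∀ β ∈ {β : ℝ |
      ((fun i => α * x o i), (fun r => β * y o r)) ∈ FDH x y}, β ≤ 1 + C * (α - 1) := by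
    intro α hα β hβ
    simp only [FDH, Set.mem_setOf_eq] at hβ
    obtain ⟨hβ0, j, hxle, hyle⟩ := hβ
    have hβb : β ≤ b j := (hb_iff j β).mp hyle
    have haα : a j ≤ α := (ha_iff j α).mp hxle
    by_cases hbj : 1 < b j
    · have haj := eff j hbj
      have hcj : c j = (b j - 1) / (a j - 1) := if_pos hbj
      have hbc : b j - 1 = c j * (a j - 1) := by
        rw [hcj, div_mul_cancel₀]
        linarith
      have h1 : c j * (a j - 1) ≤ C * (a j - 1) :=
        mul_le_mul_of_nonneg_right (hcC j) (by linarith)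
      have h2 : C * (a j - 1) ≤ C * (α - 1) :=
        mul_le_mul_of_nonneg_left (by linarith) hC0
      linarith
    · push_neg at hbj
      nlinarith [mul_nonneg hC0 (by linarith : (0:ℝ) ≤ α - 1)]
  have resp_le : ∀ α : ℝ, 1 < α → respFun x y o α ≤ 1 + C * (α - 1) := by
    intro α hα
    apply Real.sSup_le (key α hα)
    nlinarith [mul_nonneg hC0 (by linarith : (0:ℝ) ≤ α - 1)]
  have ratio_le : ∀ ρ ∈ {ρ : ℝ | ∃ α : ℝ, 1 < α ∧ ρ = (respFun x y o α - 1) / (α - 1)},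
      ρ ≤ C := by
    rintro ρ ⟨α, hα, rfl⟩
    rw [div_le_iff₀ (by linarith : (0:ℝ) < α - 1)]
    have := resp_le α hα
    linarith
  have sigma_le : sigmaPlus x y o ≤ C := Real.sSup_le ratio_le hC0
  constructor
  · intro hdrs
    have hC1 : C < 1 := by
      rw [hCdef]
      apply max_lt _ one_pos
      refine Iff.mpr (Finset.sup'_lt_iff _) ?_
      intro j _
      by_cases hbj : 1 < b j
      · have haj := eff j hbj
        have hba : b j < a j := by
          by_contra hle
          push_neg at hle
          apply hdrs (b j) hbj
          refine ⟨fun r => mul_nonneg (by linarith) (hy o r).le,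
            j, (ha_iff j (b j)).mpr hle, (hb_iff j (b j)).mpr le_rfl⟩
        rw [hcdef]
        simp only [if_pos hbj]
        rw [div_lt_one (by linarith)]
        linarith
      · rw [hcdef]
        simp only [if_neg hbj]
        exact one_pos
    exact lt_of_le_of_lt sigma_le hC1
  · intro hσ δ hδ hmem
    have hδS : δ ∈ {β : ℝ |
        ((fun i => δ * x o i), (fun r => β * y o r)) ∈ FDH x y} := hmem
    have hresp : δ ≤ respFun x y o δ := le_csSup ⟨1 + C * (δ - 1), key δ hδ⟩ hδS
    have hρ : (1 : ℝ) ≤ (respFun x y o δ - 1) / (δ - 1) := by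
      rw [le_div_iff₀ (by linarith : (0:ℝ) < δ - 1)]
      linarith
    have hρmem : (respFun x y o δ - 1) / (δ - 1) ∈
        {ρ : ℝ | ∃ α : ℝ, 1 < α ∧ ρ = (respFun x y o α - 1) / (α - 1)} := ⟨δ, hδ, rfl⟩
    have hle : (respFun x y o δ - 1) / (δ - 1) ≤ sigmaPlus x y o :=
      le_csSup ⟨C, ratio_le⟩ hρmem
    linarith
end
end

section
/- Let DMU_o = (x_o,y_o), o ∈ J, be FDH_V-efficient. Then Right-CRS prevails at DMU_o if and only if σ_o^+ = 1. -/
open Set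

noncomputable section

namespace S12

variable {n m s : ℕ}

noncomputable def Aa (hm : 0 < m) (x : Fin n → Fin m → ℝ) (o j : Fin n) : ℝ :=
  Finset.univ.sup' ⟨⟨0, hm⟩, Finset.mem_univ _⟩ fun i => x j i / x o i

noncomputable def Bb (hs : 0 < s) (y : Fin n → Fin s → ℝ) (o j : Fin n) : ℝ :=
  Finset.univ.inf' ⟨⟨0, hs⟩, Finset.mem_univ _⟩ fun r => y j r / y o r

variable (hm : 0 < m) (hs : 0 < s) {x : Fin n → Fin m → ℝ} {y : Fin n → Fin s → ℝ}
  (o : Fin n)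

lemma Aa_le_iff (hx : ∀ j i, 0 < x j i) {j : Fin n} {α : ℝ} : Aa hm x o j ≤ α ↔ ∀ i, x j i ≤ α * x o i := by
  simp only [Aa, Finset.sup'_le_iff, Finset.mem_univ, true_implies]
  constructor
  · intro h i
    exact (div_le_iff₀ (hx o i)).mp (le_trans (Finset.le_sup' (fun i => x j i / x o i) (Finset.mem_univ i)) h)
  · intro h
    exact Finset.sup'_le _ _ fun i _ => (div_le_iff₀ (hx o i)).mpr (h i)

lemma Aa_lt_iff (hx : ∀ j i, 0 < x j i) {j : Fin n} {α : ℝ} : Aa hm x o j < α ↔ ∀ i, x j i < α * x o i := by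
  simp only [Aa, Finset.sup'_lt_iff, Finset.mem_univ, true_implies]
  constructor
  · intro h i
    exact (div_lt_iff₀ (hx o i)).mp (lt_of_le_of_lt (Finset.le_sup' (fun i => x j i / x o i) (Finset.mem_univ i)) h)
  · intro h
    obtain ⟨k, -, hk⟩ := Finset.exists_mem_eq_sup' (⟨⟨0, hm⟩, Finset.mem_univ _⟩ : Finset.univ.Nonempty) (fun i => x j i / x o i)
    exact lt_of_eq_of_lt hk ((div_lt_iff₀ (hx o k)).mpr (h k))

lemma le_Bb_iff (hy : ∀ j r, 0 < y j r) {j : Fin n} {β : ℝ} : β ≤ Bb hs y o j ↔ ∀ r, β * y o r ≤ y j r := by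
  simp only [Bb, Finset.le_inf'_iff, Finset.mem_univ, true_implies]
  constructor
  · intro h r
    exact (le_div_iff₀ (hy o r)).mp (le_trans h (Finset.inf'_le (fun r => y j r / y o r) (Finset.mem_univ r)))
  · intro h
    exact Finset.le_inf' _ _ fun r _ => (le_div_iff₀ (hy o r)).mpr (h r)

lemma lt_Bb_iff (hy : ∀ j r, 0 < y j r) {j : Fin n} {β : ℝ} : β < Bb hs y o j ↔ ∀ r, β * y o r < y j r := by
  simp only [Bb, Finset.lt_inf'_iff, Finset.mem_univ, true_implies]
  constructor
  · intro h r
    exact (lt_div_iff₀ (hy o r)).mp (lt_of_lt_of_le h (Finset.inf'_le (fun r => y j r / y o r) (Finset.mem_univ r)))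
  · intro h
    obtain ⟨k, -, hk⟩ := Finset.exists_mem_eq_inf' (⟨⟨0, hs⟩, Finset.mem_univ _⟩ : Finset.univ.Nonempty) (fun r => y j r / y o r)
    exact lt_of_lt_of_eq ((lt_div_iff₀ (hy o k)).mpr (h k)) hk.symm

lemma Aa_o_le_one (hx : ∀ j i, 0 < x j i) : Aa hm x o o ≤ 1 :=
  (Aa_le_iff hm o hx).mpr fun i => by linarith [hx o i]

lemma one_le_Bb_o (hy : ∀ j r, 0 < y j r) : 1 ≤ Bb hs y o o :=
  (le_Bb_iff hs o hy).mpr fun r => by linarith [hy o r]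

lemma Bb_o_le_one (hy : ∀ j r, 0 < y j r) : Bb hs y o o ≤ 1 := by
  have : Bb hs y o o ≤ y o ⟨0, hs⟩ / y o ⟨0, hs⟩ :=
    Finset.inf'_le _ (Finset.mem_univ _)
  rwa [div_self (hy o ⟨0, hs⟩).ne'] at this

lemma Bb_pos (hy : ∀ j r, 0 < y j r) {j : Fin n} : 0 < Bb hs y o j :=
  (lt_Bb_iff hs o hy).mpr fun r => by simpa using hy j r

lemma mem_FDH_iff (hx : ∀ j i, 0 < x j i) (hy : ∀ j r, 0 < y j r) {α β : ℝ} :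
    ((fun i => α * x o i), (fun r => β * y o r)) ∈ FDH x y ↔
      0 ≤ β ∧ ∃ j, Aa hm x o j ≤ α ∧ β ≤ Bb hs y o j := by
  constructor
  · rintro ⟨h0, j, h1, h2⟩
    have hb : 0 ≤ β := by
      have h := h0 ⟨0, hs⟩
      simp only at h
      nlinarith [hy o ⟨0, hs⟩]
    exact ⟨hb, j, (Aa_le_iff hm o hx).mpr h1, (le_Bb_iff hs o hy).mpr h2⟩
  · rintro ⟨hβ, j, h1, h2⟩
    exact ⟨fun r => mul_nonneg hβ (hy o r).le,
      j, (Aa_le_iff hm o hx).mp h1, (le_Bb_iff hs o hy).mp h2⟩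


-- Efficiency: B_j > 1 → A_j > 1
lemma eff_AB (hx : ∀ j i, 0 < x j i) (hy : ∀ j r, 0 < y j r)
    (heff : FDHEfficient x y o) {j : Fin n} (hB : 1 < Bb hs y o j) :
    1 < Aa hm x o j := by
  by_contra hA
  push_neg at hA
  have hxle : ∀ i, x j i ≤ x o i := by
    have := (Aa_le_iff hm o hx (α := 1)).mp hA
    simpa using this
  have hylt : ∀ r, y o r < y j r := by
    have := (lt_Bb_iff hs o hy (β := 1)).mp hB
    simpa using this
  exact heff ⟨(x j, y j), ⟨fun r => (hy j r).le, j, fun i => le_rfl, fun r => le_rfl⟩,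
    hxle, fun r => (hylt r).le,
    by
      intro hpe
      have := congrArg (fun p => p.2 ⟨0, hs⟩) hpe
      simp only at this
      exact absurd this (ne_of_gt (hylt ⟨0, hs⟩))⟩

lemma respFun_le (hx : ∀ j i, 0 < x j i) (hy : ∀ j r, 0 < y j r)
    {α t : ℝ} (hα : 1 ≤ α)
    (h : ∀ j, Aa hm x o j ≤ α → Bb hs y o j ≤ t) :
    respFun x y o α ≤ t := by
  apply csSup_le
  · exact ⟨0, (mem_FDH_iff hm hs o hx hy).mpr ⟨le_rfl, o,
      le_trans (Aa_o_le_one hm o hx) hα, (Bb_pos hs o hy).le⟩⟩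
  · rintro β hβ
    obtain ⟨hb0, j, hj1, hj2⟩ := (mem_FDH_iff hm hs o hx hy).mp hβ
    exact le_trans hj2 (h j hj1)

lemma le_respFun (hx : ∀ j i, 0 < x j i) (hy : ∀ j r, 0 < y j r)
    {α : ℝ} {j : Fin n} (hj : Aa hm x o j ≤ α) :
    Bb hs y o j ≤ respFun x y o α := by
  apply le_csSup
  · refine ⟨Finset.univ.sup' ⟨o, Finset.mem_univ o⟩ (fun j' => Bb hs y o j'), ?_⟩
    rintro β hβ
    obtain ⟨hb0, j', hj1, hj2⟩ := (mem_FDH_iff hm hs o hx hy).mp hβ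
    exact le_trans hj2 (Finset.le_sup' _ (Finset.mem_univ j'))
  · exact (mem_FDH_iff hm hs o hx hy).mpr ⟨(Bb_pos hs o hy).le, j, hj, le_rfl⟩

lemma irs_of (hx : ∀ j i, 0 < x j i) (hy : ∀ j r, 0 < y j r)
    (heff : FDHEfficient x y o) {j : Fin n}
    (hB : 1 < Bb hs y o j) (hAB : Aa hm x o j < Bb hs y o j) :
    RightIRS x y o := by
  have hA : 1 < Aa hm x o j := eff_AB hm hs o hx hy heff hB
  set δ := (Aa hm x o j + Bb hs y o j) / 2 with hδdef
  have hδ1 : 1 < δ := by simp only [hδdef]; linarith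
  have hAδ : Aa hm x o j < δ := by simp only [hδdef]; linarith
  have hδB : δ < Bb hs y o j := by simp only [hδdef]; linarith
  refine ⟨δ, hδ1, ?_⟩
  set U : Set ((Fin m → ℝ) × (Fin s → ℝ)) :=
    {p | (∀ i, x j i < p.1 i) ∧ (∀ r, 0 < p.2 r ∧ p.2 r < y j r)} with hU
  have hUopen : IsOpen U := by
    have : U = (⋂ i, {p : (Fin m → ℝ) × (Fin s → ℝ) | x j i < p.1 i}) ∩
        ((⋂ r, {p : (Fin m → ℝ) × (Fin s → ℝ) | 0 < p.2 r}) ∩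
         (⋂ r, {p : (Fin m → ℝ) × (Fin s → ℝ) | p.2 r < y j r})) := by
      ext p
      simp only [hU, mem_setOf_eq, mem_inter_iff, mem_iInter, forall_and]
    rw [this]
    refine IsOpen.inter (isOpen_iInter_of_finite fun i => ?_)
      (IsOpen.inter (isOpen_iInter_of_finite fun r => ?_)
        (isOpen_iInter_of_finite fun r => ?_))
    · exact isOpen_lt continuous_const ((continuous_apply i).comp continuous_fst)
    · exact isOpen_lt continuous_const ((continuous_apply r).comp continuous_snd)
    · exact isOpen_lt ((continuous_apply r).comp continuous_snd) continuous_const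
  have hUT : U ⊆ FDH x y := by
    rintro p ⟨h1, h2⟩
    exact ⟨fun r => (h2 r).1.le, j, fun i => (h1 i).le, fun r => (h2 r).2.le⟩
  apply interior_maximal hUT hUopen
  refine ⟨(Aa_lt_iff hm o hx).mp hAδ, fun r => ⟨?_, ?_⟩⟩
  · exact mul_pos (by linarith) (hy o r)
  · exact (lt_Bb_iff hs o hy).mp hδB r

lemma of_irs (hx : ∀ j i, 0 < x j i) (hy : ∀ j r, 0 < y j r)
    (hirs : RightIRS x y o) :
    ∃ j, 1 < Bb hs y o j ∧ Aa hm x o j < Bb hs y o j := by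
  obtain ⟨δ, hδ, hmem⟩ := hirs
  set f : ℝ → (Fin m → ℝ) × (Fin s → ℝ) :=
    fun ε => ((fun i => δ * x o i - ε), (fun r => δ * y o r + ε)) with hf
  have hfc : Continuous f := by
    apply Continuous.prodMk <;> exact continuous_pi fun _ => by fun_prop
  have hf0 : f 0 = ((fun i => δ * x o i), (fun r => δ * y o r)) := by
    simp [hf]
  have hnhds : f ⁻¹' interior (FDH x y) ∈ nhds (0 : ℝ) := by
    apply hfc.continuousAt.preimage_mem_nhds
    rw [hf0]
    exact isOpen_interior.mem_nhds hmem
  obtain ⟨ε, hε, hball⟩ := Metric.mem_nhds_iff.mp hnhds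
  have hmem2 : f (ε / 2) ∈ FDH x y := by
    apply interior_subset
    apply hball
    rw [Metric.mem_ball, Real.dist_eq, sub_zero, abs_of_pos (half_pos hε)]
    linarith
  obtain ⟨h0, j, h1, h2⟩ := hmem2
  simp only [hf] at h1 h2
  have hAδ : Aa hm x o j < δ := (Aa_lt_iff hm o hx).mpr fun i => by linarith [h1 i]
  have hδB : δ < Bb hs y o j := (lt_Bb_iff hs o hy).mpr fun r => by linarith [h2 r]
  exact ⟨j, lt_trans hδ hδB, lt_trans hAδ hδB⟩

noncomputable def gg (hm : 0 < m) (hs : 0 < s) (x : Fin n → Fin m → ℝ)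
    (y : Fin n → Fin s → ℝ) (o j : Fin n) : ℝ :=
  if 1 < Bb hs y o j then (Bb hs y o j - 1) / (Aa hm x o j - 1) else 0

noncomputable def cc (hm : 0 < m) (hs : 0 < s) (x : Fin n → Fin m → ℝ)
    (y : Fin n → Fin s → ℝ) (o : Fin n) : ℝ :=
  Finset.univ.sup' ⟨o, Finset.mem_univ o⟩ (gg hm hs x y o)

lemma cc_nonneg (hy : ∀ j r, 0 < y j r) : 0 ≤ cc hm hs x y o := by
  have : gg hm hs x y o o = 0 := by
    rw [gg, if_neg (not_lt.mpr (Bb_o_le_one hs o hy))]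
  calc (0:ℝ) = gg hm hs x y o o := this.symm
    _ ≤ cc hm hs x y o := Finset.le_sup' _ (Finset.mem_univ o)

lemma ratio_le_cc (hx : ∀ j i, 0 < x j i) (hy : ∀ j r, 0 < y j r)
    (heff : FDHEfficient x y o) {α : ℝ} (hα : 1 < α) :
    (respFun x y o α - 1) / (α - 1) ≤ cc hm hs x y o := by
  rw [div_le_iff₀ (by linarith)]
  have hc0 := cc_nonneg hm hs (x := x) o hy
  have : respFun x y o α ≤ cc hm hs x y o * (α - 1) + 1 := by
    apply respFun_le hm hs o hx hy hα.le
    intro j hj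
    by_cases hB : 1 < Bb hs y o j
    · have hA : 1 < Aa hm x o j := eff_AB hm hs o hx hy heff hB
      have hg : (Bb hs y o j - 1) / (Aa hm x o j - 1) ≤ cc hm hs x y o := by
        have := Finset.le_sup' (gg hm hs x y o) (Finset.mem_univ j)
        rwa [gg, if_pos hB] at this
      have h1 : Bb hs y o j - 1 ≤ cc hm hs x y o * (Aa hm x o j - 1) :=
        (div_le_iff₀ (by linarith)).mp hg
      have h2 : cc hm hs x y o * (Aa hm x o j - 1) ≤ cc hm hs x y o * (α - 1) :=
        mul_le_mul_of_nonneg_left (by linarith) hc0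
      linarith
    · push_neg at hB
      nlinarith
  linarith

include hm hs in
theorem main (hx : ∀ j i, 0 < x j i) (hy : ∀ j r, 0 < y j r)
    (heff : FDHEfficient x y o) :
    RightCRS x y o ↔ sigmaPlus x y o = 1 := by
  set S : Set ℝ := {ρ : ℝ | ∃ α : ℝ, 1 < α ∧ ρ = (respFun x y o α - 1) / (α - 1)}
    with hS
  have hSs : sigmaPlus x y o = sSup S := rfl
  have hSne : S.Nonempty := ⟨(respFun x y o 2 - 1) / (2 - 1), 2, one_lt_two, rfl⟩
  have hSbdd : BddAbove S := by
    refine ⟨cc hm hs x y o, ?_⟩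
    rintro ρ ⟨α, hα, rfl⟩
    exact ratio_le_cc hm hs o hx hy heff hα
  constructor
  · rintro ⟨hni, hnd⟩
    unfold RightDRS at hnd
    push_neg at hnd
    obtain ⟨δ, hδ1, hδmem⟩ := hnd
    obtain ⟨-, j, hj1, hj2⟩ := (mem_FDH_iff hm hs o hx hy).mp hδmem
    have hub : ∀ ρ ∈ S, ρ ≤ 1 := by
      rintro ρ ⟨α, hα, rfl⟩
      rw [div_le_one (by linarith)]
      have : respFun x y o α ≤ α := by
        apply respFun_le hm hs o hx hy hα.le
        intro j' hj'
        by_cases hB : 1 < Bb hs y o j'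
        · by_cases hAB : Aa hm x o j' < Bb hs y o j'
          · exact absurd (irs_of hm hs o hx hy heff hB hAB) hni
          · push_neg at hAB
            linarith
        · push_neg at hB
          linarith
      linarith
    have hmemS : (respFun x y o δ - 1) / (δ - 1) ∈ S := ⟨δ, hδ1, rfl⟩
    have hρ1 : 1 ≤ (respFun x y o δ - 1) / (δ - 1) := by
      rw [le_div_iff₀ (by linarith)]
      have h1 : Bb hs y o j ≤ respFun x y o δ := le_respFun hm hs o hx hy hj1
      linarith
    rw [hSs]
    exact le_antisymm (csSup_le hSne hub) (le_trans hρ1 (le_csSup hSbdd hmemS))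
  · intro hσ
    constructor
    · intro hirs
      obtain ⟨j, hB, hAB⟩ := of_irs hm hs o hx hy hirs
      have hA : 1 < Aa hm x o j := eff_AB hm hs o hx hy heff hB
      have hmemS : (respFun x y o (Aa hm x o j) - 1) / (Aa hm x o j - 1) ∈ S :=
        ⟨Aa hm x o j, hA, rfl⟩
      have h1 : Bb hs y o j ≤ respFun x y o (Aa hm x o j) :=
        le_respFun hm hs o hx hy le_rfl
      have h2 : 1 < (respFun x y o (Aa hm x o j) - 1) / (Aa hm x o j - 1) := by
        rw [lt_div_iff₀ (by linarith)]
        linarith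
      have := le_csSup hSbdd hmemS
      rw [← hSs, hσ] at this
      linarith
    · intro hdrs
      have hkey : ∀ j, 1 < Bb hs y o j → Bb hs y o j < Aa hm x o j := by
        intro j hB
        by_contra hh
        push_neg at hh
        exact hdrs (Bb hs y o j) hB
          ((mem_FDH_iff hm hs o hx hy).mpr ⟨by linarith, j, hh, le_rfl⟩)
      have hclt : cc hm hs x y o < 1 := by
        rw [cc]
        refine (Finset.sup'_lt_iff (H := (⟨o, Finset.mem_univ o⟩ : Finset.univ.Nonempty))).mpr ?_
        intro j _
        rw [gg]
        by_cases hB : 1 < Bb hs y o j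
        · rw [if_pos hB]
          have hA : 1 < Aa hm x o j := eff_AB hm hs o hx hy heff hB
          rw [div_lt_one (by linarith)]
          linarith [hkey j hB]
        · rw [if_neg hB]
          norm_num
      have hle : sigmaPlus x y o ≤ cc hm hs x y o := by
        rw [hSs]
        apply csSup_le hSne
        rintro ρ ⟨α, hα, rfl⟩
        exact ratio_le_cc hm hs o hx hy heff hα
      rw [hσ] at hle
      linarith

end S12

/-- Right-CRS at the FDH_V-efficient DMU_o iff `σ_o^+ = 1`. -/
theorem stmt12 {n m s : ℕ} (hm : 0 < m) (hs : 0 < s)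
    (x : Fin n → Fin m → ℝ) (y : Fin n → Fin s → ℝ)
    (hx : ∀ j i, 0 < x j i) (hy : ∀ j r, 0 < y j r)
    (o : Fin n) (heff : FDHEfficient x y o) :
    RightCRS x y o ↔ sigmaPlus x y o = 1 := by
  exact S12.main hm hs o hx hy heff
end
end

section
/- Let DMU_o = (x_o,y_o), o ∈ J, be FDH_V-efficient. Then Left-IRS prevails at DMU_o if and only if σ_o^- > 1. -/
open Set

noncomputable section

section Aux

variable {n m s : ℕ} (x : Fin n → Fin m → ℝ) (y : Fin n → Fin s → ℝ) (o : Fin n)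

lemma aux_hxa [Nonempty (Fin m)] (hx : ∀ j i, 0 < x j i) (j : Fin n) (α : ℝ) :
    (∀ i, x j i ≤ α * x o i) ↔ (⨆ i, x j i / x o i) ≤ α := by
  constructor
  · intro h
    exact ciSup_le fun i => (div_le_iff₀ (hx o i)).2 (h i)
  · intro h i
    have h1 : x j i / x o i ≤ α :=
      le_trans (le_ciSup (Set.Finite.bddAbove (Set.finite_range (fun i => x j i / x o i))) i) h
    exact (div_le_iff₀ (hx o i)).1 h1

lemma aux_hyb [Nonempty (Fin s)] (hy : ∀ j r, 0 < y j r) (j : Fin n) (β : ℝ) :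
    (∀ r, β * y o r ≤ y j r) ↔ β ≤ (⨅ r, y j r / y o r) := by
  constructor
  · intro h
    exact le_ciInf fun r => (le_div_iff₀ (hy o r)).2 (h r)
  · intro h r
    have h1 : β ≤ y j r / y o r :=
      le_trans h (ciInf_le (Set.Finite.bddBelow (Set.finite_range (fun r => y j r / y o r))) r)
    exact (le_div_iff₀ (hy o r)).1 h1

lemma aux_apos [Nonempty (Fin m)] (hx : ∀ j i, 0 < x j i) (j : Fin n) :
    0 < (⨆ i, x j i / x o i) := by
  obtain ⟨i⟩ := ‹Nonempty (Fin m)›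
  exact lt_of_lt_of_le (div_pos (hx j i) (hx o i))
    (le_ciSup (Set.Finite.bddAbove (Set.finite_range (fun i => x j i / x o i))) i)

lemma aux_bnn [Nonempty (Fin s)] (hy : ∀ j r, 0 < y j r) (j : Fin n) :
    0 ≤ (⨅ r, y j r / y o r) :=
  le_ciInf fun r => (div_pos (hy j r) (hy o r)).le

end Aux

/-- Left-IRS at the FDH_V-efficient DMU_o iff `σ_o^- > 1`. -/
theorem stmt13 {n m s : ℕ} (hm : 0 < m) (hs : 0 < s)
    (x : Fin n → Fin m → ℝ) (y : Fin n → Fin s → ℝ)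
    (hx : ∀ j i, 0 < x j i) (hy : ∀ j r, 0 < y j r)
    (o : Fin n) (heff : FDHEfficient x y o) :
    LeftIRS x y o ↔ (1 : EReal) < sigmaMinus x y o := by
  classical
  have hmne : Nonempty (Fin m) := ⟨⟨0, hm⟩⟩
  have hsne : Nonempty (Fin s) := ⟨⟨0, hs⟩⟩
  set a : Fin n → ℝ := fun j => ⨆ i, x j i / x o i with ha
  set b : Fin n → ℝ := fun j => ⨅ r, y j r / y o r with hb
  have hxa : ∀ (j : Fin n) (α : ℝ), (∀ i, x j i ≤ α * x o i) ↔ a j ≤ α :=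
    fun j α => aux_hxa x o hx j α
  have hyb : ∀ (j : Fin n) (β : ℝ), (∀ r, β * y o r ≤ y j r) ↔ β ≤ b j :=
    fun j β => aux_hyb y o hy j β
  have hapos : ∀ j, 0 < a j := fun j => aux_apos x o hx j
  have hbnn : ∀ j, 0 ≤ b j := fun j => aux_bnn y o hy j
  -- membership in FDH for scaled points
  have hmemFDH : ∀ (α β : ℝ),
      ((fun i => α * x o i), (fun r => β * y o r)) ∈ FDH x y ↔
        0 ≤ β ∧ ∃ j, a j ≤ α ∧ β ≤ b j := by
    intro α β
    constructor
    · rintro ⟨h0, j, h1, h2⟩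
      have hβ : 0 ≤ β := by
        have h := h0 ⟨0, hs⟩
        simp only at h
        nlinarith [hy o ⟨0, hs⟩]
      exact ⟨hβ, j, (hxa j α).1 h1, (hyb j β).1 h2⟩
    · rintro ⟨hβ, j, h1, h2⟩
      exact ⟨fun r => mul_nonneg hβ (hy o r).le, j, (hxa j α).2 h1, (hyb j β).2 h2⟩
  -- evaluation of respFun at feasible α
  have hresp : ∀ (α : ℝ), (∃ j, a j ≤ α) →
      ∃ j, a j ≤ α ∧ respFun x y o α = b j ∧ ∀ k, a k ≤ α → b k ≤ b j := by
    intro α ⟨j0, hj0⟩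
    set F : Finset (Fin n) := Finset.univ.filter (fun j => a j ≤ α) with hF
    have hFne : F.Nonempty := ⟨j0, by simp [hF, hj0]⟩
    obtain ⟨js, hjsF, hjs⟩ := Finset.exists_mem_eq_sup' hFne b
    have hjsα : a js ≤ α := by simpa [hF] using hjsF
    refine ⟨js, hjsα, ?_, ?_⟩
    · have hgreat : IsGreatest
          {β : ℝ | ((fun i => α * x o i), (fun r => β * y o r)) ∈ FDH x y} (b js) := by
        constructor
        · exact (hmemFDH α (b js)).2 ⟨hbnn js, js, hjsα, le_refl _⟩
        · intro β hβ
          obtain ⟨hβ0, j, hjα, hjb⟩ := (hmemFDH α β).1 hβ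
          have hjF : j ∈ F := by simp [hF, hjα]
          calc β ≤ b j := hjb
            _ ≤ F.sup' hFne b := Finset.le_sup' b hjF
            _ = b js := hjs
      exact hgreat.csSup_eq
    · intro k hk
      have hkF : k ∈ F := by simp [hF, hk]
      calc b k ≤ F.sup' hFne b := Finset.le_sup' b hkF
        _ = b js := hjs
  constructor
  · -- LeftIRS → 1 < σ⁻
    intro hirs
    have hkey : ∀ j, a j < 1 → b j < a j := by
      intro j haj
      by_contra hle
      push_neg at hle
      set δ : ℝ := min (b j) ((a j + 1) / 2) with hδ
      have hδ0 : 0 < δ := lt_min (lt_of_lt_of_le (hapos j) hle) (by linarith [hapos j])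
      have hδ1 : δ < 1 := lt_of_le_of_lt (min_le_right _ _) (by linarith)
      have haδ : a j ≤ δ := le_min hle (by linarith)
      exact hirs δ hδ0 hδ1 ((hmemFDH δ δ).2 ⟨hδ0.le, j, haδ, min_le_left _ _⟩)
    rw [sigmaMinus]
    by_cases hG : ∃ j, a j < 1
    · set G : Finset (Fin n) := Finset.univ.filter (fun j => a j < 1) with hGdef
      have hGne : G.Nonempty := ⟨hG.choose, by simp [hGdef, hG.choose_spec]⟩
      set c : ℝ := G.inf' hGne (fun j => (1 - b j) / (1 - a j)) with hc
      have hc1 : 1 < c := by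
        rw [hc, Finset.lt_inf'_iff]
        intro j hjG
        have haj : a j < 1 := by simpa [hGdef] using hjG
        have hbj : b j < a j := hkey j haj
        rw [lt_div_iff₀ (by linarith)]
        linarith
      have hle : (c : EReal) ≤
          sInf {ρ : EReal | ∃ α : ℝ, α < 1 ∧
            (∃ β : ℝ, ((fun i => α * x o i), (fun r => β * y o r)) ∈ FDH x y) ∧
            ρ = (((respFun x y o α - 1) / (α - 1) : ℝ) : EReal)} := by
        apply le_sInf
        rintro ρ ⟨α, hα1, ⟨β, hβmem⟩, rfl⟩
        obtain ⟨-, j0, hj0, -⟩ := (hmemFDH α β).1 hβmem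
        obtain ⟨js, hjsα, hjsval, -⟩ := hresp α ⟨j0, hj0⟩
        have hjs1 : a js < 1 := lt_of_le_of_lt hjsα hα1
        have hbjs : b js < a js := hkey js hjs1
        have hjsG : js ∈ G := by simp [hGdef, hjs1]
        have hcle : c ≤ (1 - b js) / (1 - a js) :=
          Finset.inf'_le (fun j => (1 - b j) / (1 - a j)) hjsG
        have hratio : (1 - b js) / (1 - a js) ≤ (respFun x y o α - 1) / (α - 1) := by
          rw [hjsval, show b js - 1 = -(1 - b js) by ring,
            show α - 1 = -(1 - α) by ring, neg_div_neg_eq]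
          exact div_le_div_of_nonneg_left (by linarith) (by linarith) (by linarith)
        exact EReal.coe_le_coe_iff.2 (le_trans hcle hratio)
      calc (1 : EReal) = ((1 : ℝ) : EReal) := by norm_num
        _ < (c : EReal) := EReal.coe_lt_coe_iff.2 hc1
        _ ≤ _ := hle
    · -- no feasible j at all: the set is empty
      push_neg at hG
      have hempty : {ρ : EReal | ∃ α : ℝ, α < 1 ∧
          (∃ β : ℝ, ((fun i => α * x o i), (fun r => β * y o r)) ∈ FDH x y) ∧
          ρ = (((respFun x y o α - 1) / (α - 1) : ℝ) : EReal)} = ∅ := by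
        ext ρ
        simp only [Set.mem_setOf_eq, Set.mem_empty_iff_false, iff_false]
        rintro ⟨α, hα1, ⟨β, hβmem⟩, -⟩
        obtain ⟨-, j, hjα, -⟩ := (hmemFDH α β).1 hβmem
        exact absurd (lt_of_le_of_lt hjα hα1) (not_lt.2 (hG j))
      rw [hempty, sInf_empty]
      exact lt_of_lt_of_le (EReal.coe_lt_top 1) (by norm_num)
  · -- 1 < σ⁻ → LeftIRS
    intro hσ δ hδ0 hδ1 hmem
    obtain ⟨-, j, hjδ, hjb⟩ := (hmemFDH δ δ).1 hmem
    obtain ⟨js, hjsδ, hjsval, hjsmax⟩ := hresp δ ⟨j, hjδ⟩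
    have hrge : δ ≤ respFun x y o δ := by
      rw [hjsval]; exact le_trans hjb (hjsmax j hjδ)
    have hratio : (respFun x y o δ - 1) / (δ - 1) ≤ 1 := by
      rw [show respFun x y o δ - 1 = -(1 - respFun x y o δ) by ring,
        show δ - 1 = -(1 - δ) by ring, neg_div_neg_eq, div_le_one (by linarith)]
      linarith
    have hin : (((respFun x y o δ - 1) / (δ - 1) : ℝ) : EReal) ∈
        {ρ : EReal | ∃ α : ℝ, α < 1 ∧
          (∃ β : ℝ, ((fun i => α * x o i), (fun r => β * y o r)) ∈ FDH x y) ∧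
          ρ = (((respFun x y o α - 1) / (α - 1) : ℝ) : EReal)} :=
      ⟨δ, hδ1, ⟨δ, hmem⟩, rfl⟩
    have hsle : sigmaMinus x y o ≤ (((respFun x y o δ - 1) / (δ - 1) : ℝ) : EReal) :=
      sInf_le hin
    have h1 : sigmaMinus x y o ≤ (1 : EReal) := by
      refine le_trans hsle ?_
      calc (((respFun x y o δ - 1) / (δ - 1) : ℝ) : EReal)
          ≤ ((1 : ℝ) : EReal) := EReal.coe_le_coe_iff.2 hratio
        _ = (1 : EReal) := by norm_num
    exact absurd hσ (not_lt.2 h1)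
end
end

section
/- Let DMU_o = (x_o,y_o), o ∈ J, be FDH_V-efficient. Then Left-DRS prevails at DMU_o if and only if σ_o^- < 1. -/
open Set

noncomputable section

/-- Left-DRS at the FDH_V-efficient DMU_o iff `σ_o^- < 1`. -/
theorem stmt14 {n m s : ℕ} (hm : 0 < m) (hs : 0 < s)
    (x : Fin n → Fin m → ℝ) (y : Fin n → Fin s → ℝ)
    (hx : ∀ j i, 0 < x j i) (hy : ∀ j r, 0 < y j r)
    (o : Fin n) (heff : FDHEfficient x y o) :
    LeftDRS x y o ↔ sigmaMinus x y o < (1 : EReal) := by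
  constructor
  · rintro ⟨δ, hδ0, hδ1, hint⟩
    -- perturb output slightly upwards, staying in T
    have hcont : Continuous fun β : ℝ =>
        (((fun i => δ * x o i) : Fin m → ℝ), (fun r => β * y o r)) := by
      refine Continuous.prodMk continuous_const ?_
      exact continuous_pi fun r => continuous_id.mul continuous_const
    have hopen : IsOpen ((fun β : ℝ =>
        (((fun i => δ * x o i) : Fin m → ℝ), fun r => β * y o r)) ⁻¹'
        interior (FDH x y)) := isOpen_interior.preimage hcont
    obtain ⟨ε, hε, hball⟩ := Metric.isOpen_iff.mp hopen δ hint
    have hβ'ball : δ + ε / 2 ∈ Metric.ball δ ε := by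
      simp only [Metric.mem_ball, Real.dist_eq]
      rw [show δ + ε / 2 - δ = ε / 2 by ring, abs_of_pos (by linarith)]
      linarith
    have hβ'mem : (((fun i => δ * x o i) : Fin m → ℝ), fun r => (δ + ε / 2) * y o r)
        ∈ FDH x y := interior_subset (hball hβ'ball)
    -- the feasible-β set is bounded above
    set r0 : Fin s := ⟨0, hs⟩
    have hbdd : BddAbove {β : ℝ |
        (((fun i => δ * x o i) : Fin m → ℝ), fun r => β * y o r) ∈ FDH x y} := by
      refine ⟨Finset.univ.sup' ⟨o, Finset.mem_univ o⟩ (fun j => y j r0 / y o r0), ?_⟩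
      rintro β ⟨hpos, j, hjx, hjy⟩
      have h1 : β * y o r0 ≤ y j r0 := hjy r0
      have h2 : β ≤ y j r0 / y o r0 := (le_div_iff₀ (hy o r0)).mpr h1
      exact h2.trans (Finset.le_sup' (fun j => y j r0 / y o r0) (Finset.mem_univ j))
    have hresp : δ + ε / 2 ≤ respFun x y o δ := le_csSup hbdd hβ'mem
    have hρlt : (respFun x y o δ - 1) / (δ - 1) < 1 := by
      rw [div_lt_iff_of_neg (by linarith : δ - 1 < 0)]
      linarith
    have hmem : (((respFun x y o δ - 1) / (δ - 1) : ℝ) : EReal) ∈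
        {ρ : EReal | ∃ α : ℝ, α < 1 ∧
          (∃ β : ℝ, ((fun i => α * x o i), (fun r => β * y o r)) ∈ FDH x y) ∧
          ρ = (((respFun x y o α - 1) / (α - 1) : ℝ) : EReal)} :=
      ⟨δ, hδ1, ⟨δ + ε / 2, hβ'mem⟩, rfl⟩
    calc sigmaMinus x y o ≤ (((respFun x y o δ - 1) / (δ - 1) : ℝ) : EReal) :=
          sInf_le hmem
      _ < (1 : EReal) := by exact_mod_cast hρlt
  · intro h
    obtain ⟨ρ, ⟨α, hα1, ⟨β₀, hβ₀⟩, rfl⟩, hρlt⟩ := sInf_lt_iff.mp h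
    have hρR : (respFun x y o α - 1) / (α - 1) < 1 := by exact_mod_cast hρlt
    obtain ⟨hpos₀, j₀, hj₀x, hj₀y⟩ := id hβ₀
    -- α > 0
    have hα0 : 0 < α := by
      have h1 : x j₀ ⟨0, hm⟩ ≤ α * x o ⟨0, hm⟩ := hj₀x ⟨0, hm⟩
      have h2 := hx j₀ ⟨0, hm⟩
      have h3 := hx o ⟨0, hm⟩
      nlinarith
    -- respFun > α
    have hresp : α < respFun x y o α := by
      by_contra hle
      push_neg at hle
      rw [div_lt_iff_of_neg (by linarith : α - 1 < 0)] at hρR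
      linarith
    obtain ⟨β, hβS, hβα⟩ := exists_lt_of_lt_csSup ⟨β₀, hβ₀⟩ hresp
    obtain ⟨hpos, j, hjx, hjy⟩ := hβS
    set δ : ℝ := (α + min β 1) / 2 with hδdef
    have hαm : α < min β 1 := lt_min hβα hα1
    have hδα : α < δ := by
      rw [hδdef]; linarith
    have hδβ : δ < β := by
      have := min_le_left β 1; rw [hδdef]; linarith
    have hδ1 : δ < 1 := by
      have := min_le_right β 1; rw [hδdef]; linarith
    refine ⟨δ, hα0.trans hδα, hδ1, ?_⟩
    -- an open box inside T containing the point
    set U : Set ((Fin m → ℝ) × (Fin s → ℝ)) :=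
      (⋂ i, {p : (Fin m → ℝ) × (Fin s → ℝ) | x j i < p.1 i}) ∩
      (⋂ r, {p : (Fin m → ℝ) × (Fin s → ℝ) | p.2 r ∈ Set.Ioo 0 (y j r)}) with hUdef
    have hUopen : IsOpen U := by
      refine IsOpen.inter (isOpen_iInter_of_finite fun i => ?_)
        (isOpen_iInter_of_finite fun r => ?_)
      · exact isOpen_Ioi.preimage ((continuous_apply i).comp continuous_fst)
      · exact isOpen_Ioo.preimage ((continuous_apply r).comp continuous_snd)
    have hUsub : U ⊆ FDH x y := by
      rintro p ⟨hp1, hp2⟩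
      simp only [Set.mem_iInter, Set.mem_setOf_eq] at hp1 hp2
      exact ⟨fun r => (hp2 r).1.le, j, fun i => (hp1 i).le, fun r => (hp2 r).2.le⟩
    have hmemU : (((fun i => δ * x o i) : Fin m → ℝ), fun r => δ * y o r) ∈ U := by
      constructor
      · simp only [Set.mem_iInter, Set.mem_setOf_eq]
        intro i
        have h1 : x j i ≤ α * x o i := hjx i
        have h2 : α * x o i < δ * x o i :=
          mul_lt_mul_of_pos_right hδα (hx o i)
        linarith
      · simp only [Set.mem_iInter, Set.mem_setOf_eq, Set.mem_Ioo]
        intro r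
        refine ⟨mul_pos (hα0.trans hδα) (hy o r), ?_⟩
        have h1 : β * y o r ≤ y j r := hjy r
        have h2 : δ * y o r < β * y o r :=
          mul_lt_mul_of_pos_right hδβ (hy o r)
        linarith
    exact interior_maximal hUsub hUopen hmemU
end
end
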